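/- arXiv:2109.05552 — 3 statements merged into one kernel-verified Lean document; each statement's English description precedes it below -/
import Mathlib

section
/- Let C ⊆ Mₙ(ℂ)⁺ be a closed convex cone, ρ a density matrix, and P the orthogonal projection onto the range of ρ. Then ρ is Birkhoff–James orthogonal in the trace norm to every member of C if and only if Tr(Pσ) ≤ 1/2 for every σ ∈ C with Tr(σ) = 1. -/
open Matrix BigOperators

/-- The trace norm of a complex square matrix: the sum of its singular values. -/
noncomputable def traceNorm {m : Type*} [Fintype m] [DecidableEq m] (A : Matrix m m ℂ) : ℝ :=
  ∑ i, Real.sqrt ((Matrix.isHermitian_conjTranspose_mul_self A).eigenvalues i)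

/-- The operator norm of a complex square matrix: its largest singular value. -/
noncomputable def opNorm {m : Type*} [Fintype m] [DecidableEq m] (A : Matrix m m ℂ) : ℝ :=
  ⨆ i, Real.sqrt ((Matrix.isHermitian_conjTranspose_mul_self A).eigenvalues i)

/-- The orthogonal projection onto the strictly positive eigenspace of a Hermitian matrix. -/
noncomputable def posProj {n : ℕ} {H : Matrix (Fin n) (Fin n) ℂ} (hH : H.IsHermitian) :
    Matrix (Fin n) (Fin n) ℂ :=
  (hH.eigenvectorUnitary : Matrix (Fin n) (Fin n) ℂ) *
    Matrix.diagonal (fun i => if 0 < hH.eigenvalues i then (1 : ℂ) else 0) *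
    (star (hH.eigenvectorUnitary : Matrix (Fin n) (Fin n) ℂ))

/-- The orthogonal projection onto the strictly negative eigenspace of a Hermitian matrix. -/
noncomputable def negProj {n : ℕ} {H : Matrix (Fin n) (Fin n) ℂ} (hH : H.IsHermitian) :
    Matrix (Fin n) (Fin n) ℂ :=
  (hH.eigenvectorUnitary : Matrix (Fin n) (Fin n) ℂ) *
    Matrix.diagonal (fun i => if hH.eigenvalues i < 0 then (1 : ℂ) else 0) *
    (star (hH.eigenvectorUnitary : Matrix (Fin n) (Fin n) ℂ))

/-- The orthogonal projection onto the range of a Hermitian matrix. -/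
noncomputable def rangeProj {n : ℕ} {H : Matrix (Fin n) (Fin n) ℂ} (hH : H.IsHermitian) :
    Matrix (Fin n) (Fin n) ℂ :=
  (hH.eigenvectorUnitary : Matrix (Fin n) (Fin n) ℂ) *
    Matrix.diagonal (fun i => if hH.eigenvalues i ≠ 0 then (1 : ℂ) else 0) *
    (star (hH.eigenvectorUnitary : Matrix (Fin n) (Fin n) ℂ))

/-- `A` is Birkhoff–James orthogonal to `B` in the trace norm. -/
noncomputable def BJOrth {m : Type*} [Fintype m] [DecidableEq m] (A B : Matrix m m ℂ) : Prop :=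
  ∀ l : ℝ, traceNorm A ≤ traceNorm (A + (l : ℂ) • B)

/-- The principal submatrix of `A` indexed by the finite set `s`. -/
def principalSub {n : ℕ} (A : Matrix (Fin n) (Fin n) ℂ) (s : Finset (Fin n)) :
    Matrix {i // i ∈ s} {i // i ∈ s} ℂ :=
  A.submatrix (fun i => (i : Fin n)) (fun i => (i : Fin n))


open scoped ComplexOrder

variable {m : Type*} [Fintype m] [DecidableEq m]

noncomputable def mcfc {A : Matrix m m ℂ} (hA : A.IsHermitian) (f : ℝ → ℝ) : Matrix m m ℂ :=
  (hA.eigenvectorUnitary : Matrix m m ℂ) *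
    Matrix.diagonal (fun i => (f (hA.eigenvalues i) : ℂ)) *
    (star (hA.eigenvectorUnitary : Matrix m m ℂ))

variable {A : Matrix m m ℂ} (hA : A.IsHermitian)

lemma star_mul_self_eigU :
    (star (hA.eigenvectorUnitary : Matrix m m ℂ)) * (hA.eigenvectorUnitary : Matrix m m ℂ) = 1 := by
  exact_mod_cast Unitary.coe_star_mul_self hA.eigenvectorUnitary

lemma mul_star_self_eigU :
    (hA.eigenvectorUnitary : Matrix m m ℂ) * (star (hA.eigenvectorUnitary : Matrix m m ℂ)) = 1 := by
  exact_mod_cast Unitary.coe_mul_star_self hA.eigenvectorUnitary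

lemma cancel_eigU (X : Matrix m m ℂ) :
    (star (hA.eigenvectorUnitary : Matrix m m ℂ)) * ((hA.eigenvectorUnitary : Matrix m m ℂ) * X) = X := by
  rw [← Matrix.mul_assoc, star_mul_self_eigU, Matrix.one_mul]

lemma mcfc_mul (f g : ℝ → ℝ) : mcfc hA f * mcfc hA g = mcfc hA (fun x => f x * g x) := by
  simp only [mcfc, Matrix.mul_assoc, cancel_eigU]
  rw [← Matrix.mul_assoc (diagonal _) (diagonal _), diagonal_mul_diagonal]
  congr 2
  ext i
  push_cast
  ring

lemma mcfc_trace (f : ℝ → ℝ) : (mcfc hA f).trace = ((∑ i, f (hA.eigenvalues i) : ℝ) : ℂ) := by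
  rw [mcfc, Matrix.mul_assoc, Matrix.trace_mul_comm, Matrix.mul_assoc, Matrix.trace_mul_comm,
    star_mul_self_eigU, Matrix.one_mul, trace_diagonal]
  push_cast
  rfl

lemma mcfc_herm (f : ℝ → ℝ) : (mcfc hA f).IsHermitian := by
  unfold Matrix.IsHermitian mcfc
  simp only [conjTranspose_mul, conjTranspose_conjTranspose, star_eq_conjTranspose,
    diagonal_conjTranspose, Matrix.mul_assoc]
  congr 1
  congr 1
  ext i j
  simp only [diagonal, of_apply]
  split <;> simp

lemma mcfc_psd (f : ℝ → ℝ) (hf : ∀ i, 0 ≤ f (hA.eigenvalues i)) : (mcfc hA f).PosSemidef := by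
  have hd : Matrix.PosSemidef (Matrix.diagonal (fun i => (f (hA.eigenvalues i) : ℂ))) := by
    apply Matrix.PosSemidef.diagonal
    intro i
    exact Complex.zero_le_real.mpr (hf i)
  have := hd.mul_mul_conjTranspose_same (hA.eigenvectorUnitary : Matrix m m ℂ)
  simpa [mcfc, Matrix.mul_assoc, Matrix.star_eq_conjTranspose] using this

lemma mcfc_id : mcfc hA (fun x => x) = A := by
  rw [mcfc]
  exact hA.spectral_theorem.symm

lemma mcfc_one : mcfc hA (fun _ => 1) = 1 := by
  rw [mcfc]
  simp [mul_star_self_eigU hA]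

lemma mcfc_add (f g : ℝ → ℝ) : mcfc hA f + mcfc hA g = mcfc hA (fun x => f x + g x) := by
  simp only [mcfc, ← Matrix.add_mul, ← Matrix.mul_add, diagonal_add]
  congr 3
  ext i
  push_cast
  ring

lemma mcfc_smul (c : ℝ) (f : ℝ → ℝ) : (c : ℂ) • mcfc hA f = mcfc hA (fun x => c * f x) := by
  simp only [mcfc]
  rw [show ((c:ℂ) • ((hA.eigenvectorUnitary : Matrix m m ℂ) * (diagonal fun i => ((f (hA.eigenvalues i) : ℝ) : ℂ)) * star (hA.eigenvectorUnitary : Matrix m m ℂ))) = (hA.eigenvectorUnitary : Matrix m m ℂ) * ((c:ℂ) • (diagonal fun i => ((f (hA.eigenvalues i) : ℝ) : ℂ))) * star (hA.eigenvectorUnitary : Matrix m m ℂ) by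
    simp [Matrix.smul_mul, Matrix.mul_smul]]
  rw [← diagonal_smul]
  congr 2
  ext i j
  simp only [diagonal_apply, Pi.smul_apply, smul_eq_mul]
  split <;> simp

lemma mcfc_sub (f g : ℝ → ℝ) : mcfc hA f - mcfc hA g = mcfc hA (fun x => f x - g x) := by
  have := mcfc_add hA (fun x => f x - g x) g
  simp only [sub_add_cancel] at this
  rw [← this]; abel

lemma psd_diag_re_nonneg {M : Matrix m m ℂ} (hM : M.PosSemidef) (i : m) : 0 ≤ (M i i).re := by
  have h := hM.dotProduct_mulVec_nonneg (Pi.single i 1)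
  have : dotProduct (star (Pi.single i 1)) (M *ᵥ (Pi.single i 1)) = M i i := by
    simp [Matrix.mulVec_single, dotProduct, Pi.single_apply, apply_ite]
  rw [this] at h
  exact (Complex.le_def.mp h).1

lemma psd_trace_re_nonneg {M : Matrix m m ℂ} (hM : M.PosSemidef) : 0 ≤ M.trace.re := by
  rw [Matrix.trace, Complex.re_sum]
  exact Finset.sum_nonneg fun i _ => psd_diag_re_nonneg hM i

lemma sandwich_trace_nonneg {M : Matrix m m ℂ} (hM : M.PosSemidef) (X : Matrix m m ℂ) :
    0 ≤ ((Xᴴ * M * X).trace).re :=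
  psd_trace_re_nonneg (hM.conjTranspose_mul_mul_same X)

lemma herm_trace_eq : A.trace = ((∑ i, hA.eigenvalues i : ℝ) : ℂ) := by
  conv_lhs => rw [← mcfc_id hA]
  rw [mcfc_trace]

lemma traceNorm_herm : traceNorm A = ∑ i, |hA.eigenvalues i| := by
  have hB : (Aᴴ * A).PosSemidef := Matrix.posSemidef_conjTranspose_mul_self A
  have hM : (mcfc hA (fun x => |x|)).PosSemidef := mcfc_psd hA _ (fun i => abs_nonneg _)
  have hsq : (mcfc hA (fun x => |x|)) ^ 2 = Aᴴ * A := by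
    rw [pow_two, mcfc_mul]
    have h1 : (fun x : ℝ => |x| * |x|) = fun x : ℝ => x * x := by
      ext x; exact abs_mul_abs_self x
    rw [h1, ← mcfc_mul, mcfc_id, hA.eq]
  have hsq2 : (mcfc hB.1 Real.sqrt) ^ 2 = Aᴴ * A := by
    rw [pow_two, mcfc_mul]
    conv_rhs => rw [← mcfc_id hB.1]
    unfold mcfc
    congr 3
    ext i
    simp only [Real.mul_self_sqrt (hB.eigenvalues_nonneg i)]
  have hM2 := mcfc_psd hB.1 Real.sqrt (fun i => Real.sqrt_nonneg _)
  have heq : mcfc hA (fun x => |x|) = mcfc hB.1 Real.sqrt := by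
    open scoped MatrixOrder in
    rw [← (CFC.sqrt_eq_iff (Aᴴ * A) _ hB.nonneg hM.nonneg).mpr (by rw [← pow_two]; exact hsq),
      (CFC.sqrt_eq_iff _ _ hB.nonneg hM2.nonneg).mpr (by rw [← pow_two]; exact hsq2)]
  have t3 : (mcfc hB.1 Real.sqrt).trace = ((∑ i, Real.sqrt (hB.1.eigenvalues i) : ℝ) : ℂ) := by
    rw [mcfc_trace]
  have t4 : traceNorm A = ∑ i, Real.sqrt (hB.1.eigenvalues i) := rfl
  have t1 : (mcfc hA fun x => |x|).trace = ((∑ i, |hA.eigenvalues i| : ℝ) : ℂ) :=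
    mcfc_trace hA _
  rw [← heq, t1] at t3
  rw [t4, ← Complex.ofReal_inj, ← t3]

lemma traceNorm_psd {M : Matrix m m ℂ} (hM : M.PosSemidef) : traceNorm M = M.trace.re := by
  rw [traceNorm_herm hM.1, herm_trace_eq hM.1]
  rw [Complex.ofReal_re]
  exact Finset.sum_congr rfl fun i _ => abs_of_nonneg (hM.eigenvalues_nonneg i)

lemma trace_mul_re_le_traceNorm (hA : A.IsHermitian) {W : Matrix m m ℂ}
    (h1 : (1 - W).PosSemidef) (h2 : (1 + W).PosSemidef) :
    ((W * A).trace).re ≤ traceNorm A := by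
  set U : Matrix m m ℂ := (hA.eigenvectorUnitary : Matrix m m ℂ) with hU
  have htr : (W * A).trace = ∑ i, (star U * W * U) i i * ((hA.eigenvalues i : ℝ) : ℂ) := by
    conv_lhs => rw [← mcfc_id hA, mcfc]
    rw [← Matrix.mul_assoc, Matrix.trace_mul_cycle, ← Matrix.mul_assoc]
    simp [Matrix.trace, Matrix.diag, Matrix.mul_diagonal, Function.comp]
    rfl
  have hbound : ∀ i, |((star U * W * U) i i).re| ≤ 1 := by
    intro i
    have hplus := psd_diag_re_nonneg (h2.conjTranspose_mul_mul_same U) i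
    have hminus := psd_diag_re_nonneg (h1.conjTranspose_mul_mul_same U) i
    have hid : (Uᴴ * (1 : Matrix m m ℂ) * U) i i = 1 := by
      rw [Matrix.mul_one, ← Matrix.star_eq_conjTranspose, star_mul_self_eigU hA,
        Matrix.one_apply_eq]
    have e1 : Uᴴ * (1 - W) * U = Uᴴ * (1 : Matrix m m ℂ) * U - Uᴴ * W * U := by
      rw [mul_sub, sub_mul]
    have e2 : Uᴴ * (1 + W) * U = Uᴴ * (1 : Matrix m m ℂ) * U + Uᴴ * W * U := by
      rw [mul_add, add_mul]
    rw [e1] at hminus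
    rw [e2] at hplus
    simp only [Matrix.sub_apply, Matrix.add_apply, Complex.sub_re, Complex.add_re, hid] at hminus hplus
    rw [← Matrix.star_eq_conjTranspose] at hminus hplus
    simp only [Complex.one_re] at hminus hplus
    rw [abs_le]
    constructor <;> linarith
  rw [traceNorm_herm hA, htr, Complex.re_sum]
  apply Finset.sum_le_sum
  intro i _
  have : ((star U * W * U) i i * ((hA.eigenvalues i : ℝ) : ℂ)).re
      = ((star U * W * U) i i).re * hA.eigenvalues i := by
    simp [Complex.mul_re]
  rw [this]
  calc ((star U * W * U) i i).re * hA.eigenvalues i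
      ≤ |((star U * W * U) i i).re * hA.eigenvalues i| := le_abs_self _
    _ = |((star U * W * U) i i).re| * |hA.eigenvalues i| := abs_mul _ _
    _ ≤ 1 * |hA.eigenvalues i| := by
        apply mul_le_mul_of_nonneg_right (hbound i) (abs_nonneg _)
    _ = |hA.eigenvalues i| := one_mul _

lemma mcfc_congr (f g : ℝ → ℝ) (h : ∀ i, f (hA.eigenvalues i) = g (hA.eigenvalues i)) :
    mcfc hA f = mcfc hA g := by
  have hfun : (fun i => ((f (hA.eigenvalues i) : ℝ) : ℂ)) =
      (fun i => ((g (hA.eigenvalues i) : ℝ) : ℂ)) := funext fun i => by rw [h i]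
  unfold mcfc
  rw [hfun]

lemma idem_trace_re_nonneg {E M : Matrix m m ℂ} (hE : E.IsHermitian) (hEE : E * E = E)
    (hM : M.PosSemidef) : 0 ≤ ((E * M).trace).re := by
  have h : (Eᴴ * M * E).trace = (E * M).trace := by
    rw [hE.eq, Matrix.trace_mul_cycle, hEE]
  rw [← h]
  exact sandwich_trace_nonneg hM E

omit [Fintype m] [DecidableEq m] in
lemma herm_smul_real {M : Matrix m m ℂ} (hM : M.IsHermitian) (c : ℝ) :
    ((c : ℂ) • M).IsHermitian := by
  unfold Matrix.IsHermitian
  rw [Matrix.conjTranspose_smul, hM.eq]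
  simp

lemma psd_smul_real {M : Matrix m m ℂ} (hM : M.PosSemidef) (c : ℝ) (hc : 0 ≤ c) :
    ((c : ℂ) • M).PosSemidef := by
  refine PosSemidef.of_dotProduct_mulVec_nonneg (herm_smul_real hM.1 c) fun x => ?_
  rw [Matrix.smul_mulVec, dotProduct_smul, smul_eq_mul]
  exact mul_nonneg (Complex.zero_le_real.mpr hc) (hM.dotProduct_mulVec_nonneg x)

lemma psd_trace_real {M : Matrix m m ℂ} (hM : M.PosSemidef) :
    M.trace = ((M.trace.re : ℝ) : ℂ) := by
  rw [herm_trace_eq hM.1]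
  simp

lemma psd_nonzero_trace_pos {M : Matrix m m ℂ} (hM : M.PosSemidef) (hM0 : M ≠ 0) :
    0 < M.trace.re := by
  rw [herm_trace_eq hM.1, Complex.ofReal_re]
  rcases (Finset.sum_nonneg (fun i (_ : i ∈ Finset.univ) => hM.eigenvalues_nonneg i)).lt_or_eq
    with h | h
  · exact h
  · exfalso
    apply hM0
    have hall : ∀ i, hM.1.eigenvalues i = 0 := by
      intro i
      have := (Finset.sum_eq_zero_iff_of_nonneg
        (fun i (_ : i ∈ Finset.univ) => hM.eigenvalues_nonneg i)).mp h.symm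
      exact this i (Finset.mem_univ i)
    have : M = mcfc hM.1 (fun x => x) := (mcfc_id hM.1).symm
    rw [this, mcfc_congr hM.1 (fun x => x) (fun _ => 0) (fun i => hall i)]
    unfold mcfc
    simp

noncomputable def indf : ℝ → ℝ := fun x => if x ≠ 0 then 1 else 0

noncomputable def wfun : ℝ → ℝ := fun x => if x ≠ 0 then 1 else -1

lemma backward_lem {ρ X : Matrix m m ℂ} (hρ : ρ.PosSemidef) (hρtr : ρ.trace = 1)
    (hX : X.PosSemidef) (hhalf : 2 * ((mcfc hρ.1 indf * X).trace).re ≤ X.trace.re) :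
    BJOrth ρ X := by
  set P := mcfc hρ.1 indf with hPdef
  have hPrho : P * ρ = ρ := by
    have h0 : P * ρ = mcfc hρ.1 indf * mcfc hρ.1 (fun x => x) := by rw [mcfc_id hρ.1]
    rw [h0, mcfc_mul]
    rw [mcfc_congr hρ.1 _ (fun x => x) (fun i => by
      by_cases h : hρ.1.eigenvalues i = 0 <;> simp [indf, h])]
    exact mcfc_id hρ.1
  have trnρ : traceNorm ρ = 1 := by
    rw [traceNorm_psd hρ, hρtr, Complex.one_re]
  intro l
  rcases le_or_gt 0 l with hl | hl
  · have hpsd : (ρ + (l : ℂ) • X).PosSemidef := hρ.add (psd_smul_real hX l hl)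
    rw [trnρ, traceNorm_psd hpsd, Matrix.trace_add, Matrix.trace_smul, Complex.add_re, hρtr,
      Complex.one_re, smul_eq_mul, Complex.re_ofReal_mul]
    nlinarith [psd_trace_re_nonneg hX]
  · set W := mcfc hρ.1 wfun with hWdef
    have hW1 : (1 - W).PosSemidef := by
      rw [hWdef, ← mcfc_one hρ.1, mcfc_sub]
      exact mcfc_psd hρ.1 _ (fun i => by unfold wfun; split <;> norm_num)
    have hW2 : (1 + W).PosSemidef := by
      rw [hWdef, ← mcfc_one hρ.1, mcfc_add]
      exact mcfc_psd hρ.1 _ (fun i => by unfold wfun; split <;> norm_num)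
    have hWP : W = P + P - 1 := by
      rw [hWdef, hPdef, ← mcfc_one hρ.1, mcfc_add, mcfc_sub]
      exact mcfc_congr hρ.1 _ _ (fun i => by unfold wfun indf; split <;> norm_num)
    have hherm : (ρ + (l : ℂ) • X).IsHermitian := hρ.1.add (herm_smul_real hX.1 l)
    have key := trace_mul_re_le_traceNorm hherm (W := W) hW1 hW2
    have hWrho : W * ρ = ρ := by
      rw [hWP, sub_mul, add_mul, hPrho, Matrix.one_mul]
      abel
    have hcalc : (W * (ρ + (l : ℂ) • X)).trace = ρ.trace + (l : ℂ) * (W * X).trace := by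
      rw [mul_add, Matrix.trace_add, hWrho, Matrix.mul_smul, Matrix.trace_smul, smul_eq_mul]
    have hWX : ((W * X).trace).re = 2 * ((P * X).trace).re - X.trace.re := by
      rw [hWP, sub_mul, add_mul, Matrix.trace_sub, Matrix.trace_add, Matrix.one_mul,
        Complex.sub_re, Complex.add_re]
      ring
    have h1 : (1 : ℝ) ≤ ((W * (ρ + (l : ℂ) • X)).trace).re := by
      rw [hcalc, Complex.add_re, hρtr, Complex.one_re, Complex.re_ofReal_mul, hWX]
      nlinarith [hhalf]
    rw [trnρ]
    linarith [key, h1]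

set_option maxHeartbeats 2000000 in
lemma forward_lem {ρ σ : Matrix m m ℂ} (hρ : ρ.PosSemidef) (hρtr : ρ.trace = 1)
    (hσ : σ.PosSemidef) (hσtr : σ.trace = 1) (hBJ : BJOrth ρ σ) :
    ((mcfc hρ.1 indf * σ).trace).re ≤ 1 / 2 := by
  by_contra hcon
  push_neg at hcon
  have hsum : ∑ i, hρ.1.eigenvalues i = 1 := by
    have h := herm_trace_eq hρ.1
    rw [hρtr] at h
    exact_mod_cast h.symm
  have hex : ∃ i, hρ.1.eigenvalues i ≠ 0 := by
    by_contra h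
    push_neg at h
    rw [Finset.sum_congr rfl (fun i _ => h i)] at hsum
    simp at hsum
  obtain ⟨i₀, hi₀⟩ := hex
  obtain ⟨P, hPdef⟩ : ∃ P, P = mcfc hρ.1 indf := ⟨_, rfl⟩
  obtain ⟨Q, hQdef⟩ : ∃ Q, Q = mcfc hρ.1 (fun x => if x ≠ 0 then 0 else 1) := ⟨_, rfl⟩
  rw [← hPdef] at hcon
  have hPherm : P.IsHermitian := by rw [hPdef]; exact mcfc_herm hρ.1 _
  have hQherm : Q.IsHermitian := by rw [hQdef]; exact mcfc_herm hρ.1 _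
  have hPpsd : P.PosSemidef := by
    rw [hPdef]
    exact mcfc_psd hρ.1 _ (fun i => by unfold indf; split <;> norm_num)
  have hPP : P * P = P := by
    rw [hPdef, mcfc_mul]
    exact mcfc_congr hρ.1 _ _ (fun i => by unfold indf; split <;> norm_num)
  have hQQ : Q * Q = Q := by
    rw [hQdef, mcfc_mul]
    exact mcfc_congr hρ.1 _ _ (fun i => by split <;> norm_num)
  have hPQ : P + Q = 1 := by
    rw [hPdef, hQdef, mcfc_add, ← mcfc_one hρ.1]
    exact mcfc_congr hρ.1 _ _ (fun i => by unfold indf; split <;> norm_num)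
  -- least positive eigenvalue
  obtain ⟨r, hrdef⟩ : ∃ r : ℝ, r = Finset.univ.inf' (⟨i₀, Finset.mem_univ i₀⟩ : Finset.univ.Nonempty)
      (fun i => if hρ.1.eigenvalues i ≠ 0 then hρ.1.eigenvalues i else 1) := ⟨_, rfl⟩
  have hr0 : 0 < r := by
    rw [hrdef]
    refine (Finset.lt_inf'_iff _).mpr ?_
    intro i _
    split
    · next h => exact lt_of_le_of_ne (hρ.eigenvalues_nonneg i) (Ne.symm h)
    · norm_num
  have hrle : ∀ i, hρ.1.eigenvalues i ≠ 0 → r ≤ hρ.1.eigenvalues i := by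
    intro i hi
    have h := Finset.inf'_le (f := fun j =>
      if hρ.1.eigenvalues j ≠ 0 then hρ.1.eigenvalues j else 1) (Finset.mem_univ i)
    rw [if_pos hi] at h
    rw [hrdef]
    exact h
  obtain ⟨D, hDdef⟩ : ∃ D, D = mcfc hρ.1 (fun x => x - r * indf x) := ⟨_, rfl⟩
  have hDpsd : D.PosSemidef := by
    rw [hDdef]
    apply mcfc_psd
    intro i
    by_cases h : hρ.1.eigenvalues i = 0
    · simp [indf, h]
    · have := hrle i h
      simp only [indf, h, ne_eq, not_false_eq_true, if_true, mul_one]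
      linarith
  have hρdec : D + (r : ℂ) • P = ρ := by
    rw [hDdef, hPdef, mcfc_smul, mcfc_add,
      mcfc_congr hρ.1 _ (fun x => x) (fun i => by ring)]
    exact mcfc_id hρ.1
  -- σ facts
  have hνsum : ∑ i, hσ.1.eigenvalues i = 1 := by
    have h := herm_trace_eq hσ.1
    rw [hσtr] at h
    exact_mod_cast h.symm
  have h1σ : ((1 : Matrix m m ℂ) - σ).PosSemidef := by
    have h := mcfc_sub hσ.1 (fun _ => 1) (fun x => x)
    rw [mcfc_one, mcfc_id] at h
    rw [h]
    apply mcfc_psd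
    intro i
    have : hσ.1.eigenvalues i ≤ 1 := by
      calc hσ.1.eigenvalues i
          ≤ ∑ j, hσ.1.eigenvalues j :=
            Finset.single_le_sum (fun j _ => hσ.eigenvalues_nonneg j) (Finset.mem_univ i)
        _ = 1 := hνsum
    linarith
  -- the numbers
  have hw0 : 0 ≤ ((Q * σ).trace).re := idem_trace_re_nonneg hQherm hQQ hσ
  have hQ1P : Q = 1 - P := by rw [← hPQ]; abel
  have hwp : ((Q * σ).trace).re = 1 - ((P * σ).trace).re := by
    rw [hQ1P, sub_mul, Matrix.one_mul, Matrix.trace_sub, Complex.sub_re, hσtr, Complex.one_re]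
  have hw2 : ((Q * σ).trace).re < 1 / 2 := by rw [hwp]; linarith
  obtain ⟨w, hwdef⟩ : ∃ w : ℝ, w = ((Q * σ).trace).re := ⟨_, rfl⟩
  rw [← hwdef] at hw0 hwp hw2
  obtain ⟨t, htdef⟩ : ∃ t : ℝ, t = min (r / 2) (r * (1 / 2 - w) / 2) := ⟨_, rfl⟩
  have ht0 : 0 < t := by rw [htdef]; exact lt_min (by linarith) (by nlinarith)
  have ht1 : 2 * t ≤ r := by
    have := min_le_left (r / 2) (r * (1 / 2 - w) / 2)
    rw [← htdef] at this
    linarith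
  have ht2 : 2 * t ≤ r * (1 / 2 - w) := by
    have := min_le_right (r / 2) (r * (1 / 2 - w) / 2)
    rw [← htdef] at this
    linarith
  -- the perturbed matrix
  obtain ⟨A, hAdef⟩ : ∃ A, A = ρ + ((-t : ℝ) : ℂ) • σ := ⟨_, rfl⟩
  have hAherm : A.IsHermitian := by
    rw [hAdef]; exact hρ.1.add (herm_smul_real hσ.1 (-t))
  obtain ⟨E, hEdef⟩ : ∃ E, E = mcfc hAherm (fun x => if x < 0 then 1 else 0) := ⟨_, rfl⟩
  have hEherm : E.IsHermitian := by rw [hEdef]; exact mcfc_herm hAherm _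
  have hEE : E * E = E := by
    rw [hEdef, mcfc_mul]
    exact mcfc_congr hAherm _ _ (fun i => by split <;> norm_num)
  -- trace norm computation
  have hEA : E * A = mcfc hAherm (fun x => if x < 0 then x else 0) := by
    have h0 : mcfc hAherm (fun x => if x < 0 then (1:ℝ) else 0) * mcfc hAherm (fun x => x)
        = mcfc hAherm (fun x => if x < 0 then x else 0) := by
      rw [mcfc_mul]
      exact mcfc_congr hAherm _ _ (fun i => by split <;> simp)
    rw [mcfc_id hAherm] at h0
    rw [hEdef]
    exact h0
  have hS : ((E * A).trace).re = ∑ i, (if hAherm.eigenvalues i < 0 then hAherm.eigenvalues i else 0) := by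
    rw [hEA, mcfc_trace, Complex.ofReal_re]
  have htrA : (A.trace).re = 1 - t := by
    rw [hAdef, Matrix.trace_add, Matrix.trace_smul, hρtr, hσtr]
    simp
    ring
  have hmusum : ∑ i, hAherm.eigenvalues i = 1 - t := by
    have h := herm_trace_eq hAherm
    have h2 : ((∑ i, hAherm.eigenvalues i : ℝ) : ℂ).re = 1 - t := by rw [← h]; exact htrA
    simpa using h2
  have hnorm : traceNorm A = (1 - t) - 2 * ((E * A).trace).re := by
    rw [traceNorm_herm hAherm, hS, ← hmusum]
    rw [Finset.sum_congr rfl (fun i _ => show |hAherm.eigenvalues i|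
      = hAherm.eigenvalues i - 2 * (if hAherm.eigenvalues i < 0 then hAherm.eigenvalues i else 0)
      from by rcases lt_or_ge (hAherm.eigenvalues i) 0 with h | h
              · rw [if_pos h, abs_of_neg h]; ring
              · rw [if_neg (not_lt.mpr h), abs_of_nonneg h]; ring)]
    rw [Finset.sum_sub_distrib, ← Finset.mul_sum]
  have trnρ : traceNorm ρ = 1 := by rw [traceNorm_psd hρ, hρtr, Complex.one_re]
  have hkey : (1 : ℝ) ≤ (1 - t) - 2 * ((E * A).trace).re := by
    have h := hBJ (-t)
    rw [← hAdef] at h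
    rw [trnρ, hnorm] at h
    exact h
  have hC : (E * A).trace = (E * ρ).trace + ((-t : ℝ) : ℂ) * (E * σ).trace := by
    conv_lhs => rw [hAdef]
    rw [mul_add, Matrix.trace_add, Matrix.mul_smul, Matrix.trace_smul, smul_eq_mul]
  have hSab : ((E * A).trace).re = ((E * ρ).trace).re - t * ((E * σ).trace).re := by
    rw [hC, Complex.add_re, Complex.re_ofReal_mul]
    ring
  have hstar : t / 2 ≤ t * ((E * σ).trace).re - ((E * ρ).trace).re := by
    have := hkey
    rw [hSab] at this
    linarith
  -- decomposition of b
  have hσexp : E * (σ * E) = E * (P * (σ * (P * E))) + E * (P * (σ * (Q * E)))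
      + E * (Q * (σ * (P * E))) + E * (Q * (σ * (Q * E))) := by
    have h1 : σ = (P + Q) * (σ * (P + Q)) := by rw [hPQ]; simp
    conv_lhs => rw [h1]
    simp only [add_mul, mul_add, Matrix.mul_assoc]
    abel
  have htr7 : (E * σ).trace = (E * (σ * E)).trace := by
    calc (E * σ).trace = (σ * E).trace := Matrix.trace_mul_comm _ _
      _ = (σ * (E * E)).trace := by rw [hEE]
      _ = ((σ * E) * E).trace := by rw [Matrix.mul_assoc]
      _ = (E * (σ * E)).trace := (Matrix.trace_mul_comm _ _).symm
  have hb : ((E * σ).trace).re = ((E * (P * (σ * (P * E)))).trace).re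
      + ((E * (P * (σ * (Q * E)))).trace).re + ((E * (Q * (σ * (P * E)))).trace).re
      + ((E * (Q * (σ * (Q * E)))).trace).re := by
    rw [htr7, hσexp, Matrix.trace_add, Matrix.trace_add, Matrix.trace_add,
      Complex.add_re, Complex.add_re, Complex.add_re]
  -- master inequality
  obtain ⟨G, hGdef⟩ : ∃ G, G = (r : ℂ) • P - ((2 * t : ℝ) : ℂ) • Q := ⟨_, rfl⟩
  have hGherm : G.IsHermitian := by
    rw [hGdef]
    exact (herm_smul_real hPherm r).sub (herm_smul_real hQherm (2 * t))
  have hsw := sandwich_trace_nonneg hσ (G * E)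
  have hZh : (G * E)ᴴ = E * G := by
    rw [Matrix.conjTranspose_mul, hEherm.eq, hGherm.eq]
  rw [hZh] at hsw
  have hexp : E * G * σ * (G * E) =
      ((r : ℂ) * (r : ℂ)) • (E * (P * (σ * (P * E))))
      + (((2 * t : ℝ) : ℂ) * ((2 * t : ℝ) : ℂ)) • (E * (Q * (σ * (Q * E))))
      - ((r : ℂ) * ((2 * t : ℝ) : ℂ)) • (E * (P * (σ * (Q * E))))
      - (((2 * t : ℝ) : ℂ) * ((r : ℂ))) • (E * (Q * (σ * (P * E)))) := by
    rw [hGdef]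
    simp only [sub_mul, mul_sub, Matrix.smul_mul, Matrix.mul_smul, smul_sub, smul_add,
      smul_smul, Matrix.mul_assoc]
    module
  rw [hexp] at hsw
  simp only [Matrix.trace_add, Matrix.trace_sub, Matrix.trace_smul, smul_eq_mul,
    Complex.add_re, Complex.sub_re, mul_assoc, Complex.re_ofReal_mul] at hsw
  -- hsw : 0 ≤ r * (r * α) + 2t * (2t * β) - r * (2t * γ1) - 2t * (r * γ2)
  -- lower bound on a
  have h9 : (E * ρ).trace = (E * D).trace + (r : ℂ) * (E * P).trace := by
    conv_lhs => rw [← hρdec]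
    rw [mul_add, Matrix.trace_add, Matrix.mul_smul, Matrix.trace_smul, smul_eq_mul]
  have hED : 0 ≤ ((E * D).trace).re := idem_trace_re_nonneg hEherm hEE hDpsd
  have hax : r * ((E * P).trace).re ≤ ((E * ρ).trace).re := by
    rw [h9, Complex.add_re, Complex.re_ofReal_mul]
    linarith
  have hx0 : 0 ≤ ((E * P).trace).re := idem_trace_re_nonneg hEherm hEE hPpsd
  -- α bounds
  have hPEconj : (P * E)ᴴ = E * P := by rw [Matrix.conjTranspose_mul, hEherm.eq, hPherm.eq]
  have hQEconj : (Q * E)ᴴ = E * Q := by rw [Matrix.conjTranspose_mul, hEherm.eq, hQherm.eq]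
  have hα0 : 0 ≤ ((E * (P * (σ * (P * E)))).trace).re := by
    have h := sandwich_trace_nonneg hσ (P * E)
    rw [hPEconj] at h
    rw [show E * P * σ * (P * E) = E * (P * (σ * (P * E))) from by
      simp only [Matrix.mul_assoc]] at h
    exact h
  have hβ0 : 0 ≤ ((E * (Q * (σ * (Q * E)))).trace).re := by
    have h := sandwich_trace_nonneg hσ (Q * E)
    rw [hQEconj] at h
    rw [show E * Q * σ * (Q * E) = E * (Q * (σ * (Q * E))) from by
      simp only [Matrix.mul_assoc]] at h
    exact h
  have htrEPE : (E * (P * E)).trace = (E * P).trace := by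
    calc (E * (P * E)).trace = ((P * E) * E).trace := Matrix.trace_mul_comm _ _
      _ = (P * E).trace := by rw [Matrix.mul_assoc, hEE]
      _ = (E * P).trace := Matrix.trace_mul_comm _ _
  have hαx : ((E * (P * (σ * (P * E)))).trace).re ≤ ((E * P).trace).re := by
    have h := sandwich_trace_nonneg h1σ (P * E)
    rw [hPEconj] at h
    rw [show E * P * ((1 : Matrix m m ℂ) - σ) * (P * E)
        = E * (P * E) - E * (P * (σ * (P * E))) from by
      rw [mul_sub, sub_mul, Matrix.mul_one]
      congr 1
      · simp only [Matrix.mul_assoc]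
        rw [← Matrix.mul_assoc P P E, hPP]
      · simp only [Matrix.mul_assoc]] at h
    rw [Matrix.trace_sub, Complex.sub_re, htrEPE] at h
    linarith
  -- β ≤ w
  have hβw : ((E * (Q * (σ * (Q * E)))).trace).re ≤ w := by
    have h := sandwich_trace_nonneg hσ (Q * ((1 : Matrix m m ℂ) - E))
    rw [show (Q * ((1 : Matrix m m ℂ) - E))ᴴ = ((1 : Matrix m m ℂ) - E) * Q from by
      rw [Matrix.conjTranspose_mul, Matrix.conjTranspose_sub, Matrix.conjTranspose_one,
        hEherm.eq, hQherm.eq]] at h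
    rw [show ((1 : Matrix m m ℂ) - E) * Q * σ * (Q * ((1 : Matrix m m ℂ) - E))
        = Q * (σ * Q) - E * (Q * (σ * Q)) - Q * (σ * (Q * E)) + E * (Q * (σ * (Q * E)))
        from by
      simp only [sub_mul, mul_sub, Matrix.one_mul, Matrix.mul_one, Matrix.mul_assoc]
      abel] at h
    have T1 : (Q * (σ * Q)).trace = (Q * σ).trace := by
      calc (Q * (σ * Q)).trace = ((σ * Q) * Q).trace := Matrix.trace_mul_comm _ _
        _ = (σ * Q).trace := by rw [Matrix.mul_assoc, hQQ]
        _ = (Q * σ).trace := Matrix.trace_mul_comm _ _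
    have T2 : (Q * (σ * (Q * E))).trace = (E * (Q * (σ * Q))).trace := by
      calc (Q * (σ * (Q * E))).trace = ((Q * (σ * Q)) * E).trace := by
            simp only [Matrix.mul_assoc]
        _ = (E * (Q * (σ * Q))).trace := Matrix.trace_mul_comm _ _
    have T3 : (E * (Q * (σ * (Q * E)))).trace = (E * (Q * (σ * Q))).trace := by
      calc (E * (Q * (σ * (Q * E)))).trace = ((E * (Q * (σ * Q))) * E).trace := by
            simp only [Matrix.mul_assoc]
        _ = (E * (E * (Q * (σ * Q)))).trace := Matrix.trace_mul_comm _ _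
        _ = (E * (Q * (σ * Q))).trace := by rw [← Matrix.mul_assoc, hEE]
    rw [Matrix.trace_add, Matrix.trace_sub, Matrix.trace_sub, T1, T2, T3] at h
    rw [T3]
    simp only [Complex.add_re, Complex.sub_re] at h ⊢
    rw [hwdef]
    linarith
  -- final contradiction
  have h2r : (0:ℝ) ≤ 2*r := by linarith
  have s1 := mul_le_mul_of_nonneg_left hstar h2r
  have s2 : 2*r*(t * ((E * σ).trace).re) =
      2*r*t*((E * (P * (σ * (P * E)))).trace).re + 2*r*t*((E * (P * (σ * (Q * E)))).trace).re
      + 2*r*t*((E * (Q * (σ * (P * E)))).trace).re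
      + 2*r*t*((E * (Q * (σ * (Q * E)))).trace).re := by
    rw [hb]; ring
  have s3 : 2*r*t*((E * (P * (σ * (Q * E)))).trace).re
      + 2*r*t*((E * (Q * (σ * (P * E)))).trace).re
      ≤ r*r*((E * (P * (σ * (P * E)))).trace).re
        + 4*t*t*((E * (Q * (σ * (Q * E)))).trace).re := by
    nlinarith [hsw]
  have s4 := mul_le_mul_of_nonneg_left hax h2r
  have s5 := mul_le_mul_of_nonneg_left hαx
    (by nlinarith [mul_pos hr0 ht0, mul_pos hr0 hr0] : (0:ℝ) ≤ 2*r*t + r*r)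
  have s6 := mul_le_mul_of_nonneg_left hβw
    (by nlinarith [mul_pos hr0 ht0, mul_pos ht0 ht0] : (0:ℝ) ≤ 2*r*t + 4*t*t)
  have s7 : (2*r*t - r*r) * ((E * P).trace).re ≤ 0 := by
    apply mul_nonpos_of_nonpos_of_nonneg _ hx0
    nlinarith [mul_le_mul_of_nonneg_left ht1 hr0.le]
  have s8 : r*t ≤ (2*r*t + 4*t*t) * w := by nlinarith [s1, s2, s3, s4, s5, s6, s7]
  have s9 := mul_le_mul_of_nonneg_left ht2 (by linarith : (0:ℝ) ≤ 2*t)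
  have s10 := mul_le_mul_of_nonneg_right s9 hw0
  have s11 : r*t ≤ 2*r*t*w + 2*t*(r*(1/2 - w))*w := by nlinarith [s8, s10]
  have hpos : 0 < (1 - w)*(1 - 2*w) := by nlinarith [hw2, hw0]
  nlinarith [s11, mul_pos (mul_pos hr0 ht0) hpos]

open scoped ComplexOrder

theorem stmt_15 {n : ℕ} (C : Set (Matrix (Fin n) (Fin n) ℂ))
    (hCpsd : ∀ X ∈ C, X.PosSemidef) (hCclosed : IsClosed C)
    (hCadd : ∀ X ∈ C, ∀ Y ∈ C, X + Y ∈ C)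
    (hCsmul : ∀ X ∈ C, ∀ c : ℝ, 0 ≤ c → (c : ℂ) • X ∈ C)
    (ρ : Matrix (Fin n) (Fin n) ℂ) (hρ : ρ.PosSemidef) (hρtr : ρ.trace = 1) :
    (∀ X ∈ C, BJOrth ρ X) ↔
      ∀ σ ∈ C, σ.trace = 1 → ((rangeProj hρ.1 * σ).trace).re ≤ 1 / 2 := by
  have hPeq : rangeProj hρ.1 = mcfc hρ.1 indf := by
    unfold rangeProj mcfc
    rw [show (fun i => if hρ.1.eigenvalues i ≠ 0 then (1:ℂ) else 0)
        = (fun i => ((indf (hρ.1.eigenvalues i) : ℝ) : ℂ)) from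
      funext fun i => by unfold indf; split <;> simp]
  constructor
  · intro h σ hσC hσtr
    rw [hPeq]
    exact forward_lem hρ hρtr (hCpsd σ hσC) hσtr (h σ hσC)
  · intro h X hXC
    apply backward_lem hρ hρtr (hCpsd X hXC)
    by_cases hX0 : X = 0
    · subst hX0
      simp
    · have hXpsd := hCpsd X hXC
      have hc : 0 < X.trace.re := psd_nonzero_trace_pos hXpsd hX0
      have hXtr : X.trace = ((X.trace.re : ℝ) : ℂ) := psd_trace_real hXpsd
      have hmem := hCsmul X hXC (1 / X.trace.re) (by positivity)
      have htr1 : (((1 / X.trace.re : ℝ) : ℂ) • X).trace = 1 := by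
        rw [Matrix.trace_smul, hXtr, smul_eq_mul]
        simp only [Complex.ofReal_re]
        rw [← Complex.ofReal_mul]
        rw [show (1 / X.trace.re) * X.trace.re = 1 from by field_simp]
        simp
      have hh := h _ hmem htr1
      rw [Matrix.mul_smul, Matrix.trace_smul, smul_eq_mul, Complex.re_ofReal_mul] at hh
      rw [hPeq] at hh
      have h3 := mul_le_mul_of_nonneg_left hh hc.le
      rw [← mul_assoc, mul_one_div, div_self (ne_of_gt hc), one_mul] at h3
      linarith
end

section
/- Let ρ be an n×n density matrix with projection P onto its range. Then the modified trace distance of coherence D_coh(ρ) := min{‖ρ − X‖_tr : X positive semidefinite diagonal} equals 1 if and only if Pⱼⱼ ≤ 1/2 for all 1 ≤ j ≤ n. -/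
open Matrix BigOperators

open scoped ComplexOrder

set_option linter.unusedSectionVars false
set_option maxHeartbeats 1600000

namespace Aux
variable {m : Type*} [Fintype m] [DecidableEq m]

lemma conj_mul_conj {U : Matrix m m ℂ} (hU : U ∈ Matrix.unitaryGroup m ℂ)
    (f g : m → ℂ) :
    (U * diagonal f * star U) * (U * diagonal g * star U)
      = U * diagonal (fun i => f i * g i) * star U := by
  have h1 : star U * U = 1 := Matrix.mem_unitaryGroup_iff'.mp hU
  calc (U * diagonal f * star U) * (U * diagonal g * star U)
      = U * (diagonal f * ((star U * U) * diagonal g)) * star U := by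
        simp only [Matrix.mul_assoc]
    _ = U * diagonal (fun i => f i * g i) * star U := by
        rw [h1, Matrix.one_mul, Matrix.diagonal_mul_diagonal, Matrix.mul_assoc]

lemma trace_conj {U : Matrix m m ℂ} (hU : U ∈ Matrix.unitaryGroup m ℂ)
    (f : m → ℂ) :
    (U * diagonal f * star U).trace = ∑ i, f i := by
  have h1 : star U * U = 1 := Matrix.mem_unitaryGroup_iff'.mp hU
  rw [Matrix.trace_mul_cycle, h1, Matrix.one_mul, Matrix.trace_diagonal]

lemma conj_psd {U : Matrix m m ℂ} (_hU : U ∈ Matrix.unitaryGroup m ℂ)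
    {f : m → ℝ} (hf : ∀ i, 0 ≤ f i) :
    (U * diagonal (fun i => (f i : ℂ)) * star U).PosSemidef := by
  have h : (diagonal (fun i => (f i : ℂ))).PosSemidef :=
    Matrix.PosSemidef.diagonal fun i => Complex.zero_le_real.mpr (hf i)
  have := h.mul_mul_conjTranspose_same U
  rw [Matrix.star_eq_conjTranspose]
  exact this

lemma spectral' {A : Matrix m m ℂ} (hA : A.IsHermitian) :
    A = (hA.eigenvectorUnitary : Matrix m m ℂ) *
      diagonal (fun i => ((hA.eigenvalues i : ℝ) : ℂ)) *
      star (hA.eigenvectorUnitary : Matrix m m ℂ) := by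
  have := hA.spectral_theorem
  rw [Unitary.conjStarAlgAut_apply] at this
  exact this

open scoped MatrixOrder in
lemma traceNorm_eq_re_trace_sqrt (A : Matrix m m ℂ) :
    traceNorm A = ((CFC.sqrt (Aᴴ * A)).trace).re := by
  have hB := Matrix.posSemidef_conjTranspose_mul_self A
  have h1 : CFC.sqrt (Aᴴ * A) = (hB.1.eigenvectorUnitary : Matrix m m ℂ) *
      diagonal (fun i => ((Real.sqrt (hB.1.eigenvalues i) : ℝ) : ℂ)) *
      star (hB.1.eigenvectorUnitary : Matrix m m ℂ) := by
    rw [CFC.sqrt_eq_cfc, cfc_nnreal_eq_real _ _ (nonneg_iff_posSemidef.mpr hB), hB.1.cfc_eq]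
    simp only [IsHermitian.cfc, Unitary.conjStarAlgAut_apply]
    congr 3
    funext i
    simp [Real.coe_toNNReal', max_eq_left (hB.eigenvalues_nonneg i)]
  rw [h1, trace_conj (hB.1.eigenvectorUnitary).2]
  rw [← Complex.ofReal_sum, Complex.ofReal_re]
  rfl

open scoped MatrixOrder in
lemma traceNorm_eq_sum_abs {A : Matrix m m ℂ} (hA : A.IsHermitian) :
    traceNorm A = ∑ i, |hA.eigenvalues i| := by
  have hB := Matrix.posSemidef_conjTranspose_mul_self A
  set U := (hA.eigenvectorUnitary : Matrix m m ℂ) with hUdef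
  have hU : U ∈ Matrix.unitaryGroup m ℂ := (hA.eigenvectorUnitary).2
  set AbsA := U * diagonal (fun i => ((|hA.eigenvalues i| : ℝ) : ℂ)) * star U with hAbs
  have habs_psd : AbsA.PosSemidef := conj_psd hU (fun i => abs_nonneg _)
  have hsq : AbsA ^ 2 = Aᴴ * A := by
    rw [pow_two, hAbs, conj_mul_conj hU, hA.eq]
    conv_rhs => rw [spectral' hA]
    rw [conj_mul_conj hU]
    have : (fun i => ((|hA.eigenvalues i| : ℝ) : ℂ) * ((|hA.eigenvalues i| : ℝ) : ℂ))
        = (fun i => ((hA.eigenvalues i : ℝ) : ℂ) * ((hA.eigenvalues i : ℝ) : ℂ)) := by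
      funext i
      rw [← Complex.ofReal_mul, ← Complex.ofReal_mul, abs_mul_abs_self]
    rw [this]
  have heq : AbsA = CFC.sqrt (Aᴴ * A) :=
    ((CFC.sqrt_eq_iff _ _ (nonneg_iff_posSemidef.mpr hB) (nonneg_iff_posSemidef.mpr habs_psd)).mpr
      (by rw [← pow_two]; exact hsq)).symm
  rw [traceNorm_eq_re_trace_sqrt, ← heq, hAbs, trace_conj hU, ← Complex.ofReal_sum,
    Complex.ofReal_re]
lemma psd_diag_nonneg {A : Matrix m m ℂ} (hA : A.PosSemidef) (i : m) :
    0 ≤ A i i := by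
  exact hA.diag_nonneg

lemma psd_trace_re_nonneg {A : Matrix m m ℂ} (hA : A.PosSemidef) :
    0 ≤ (A.trace).re := by
  rw [Matrix.trace]
  rw [Complex.re_sum]
  exact Finset.sum_nonneg fun i _ => (Complex.nonneg_iff.mp (psd_diag_nonneg hA i)).1

open scoped MatrixOrder in
lemma trace_mul_psd_re_nonneg {A B : Matrix m m ℂ} (hA : A.PosSemidef) (hB : B.PosSemidef) :
    0 ≤ ((A * B).trace).re := by
  have hs := nonneg_iff_posSemidef.mp (CFC.sqrt_nonneg A)
  have h1 : A = CFC.sqrt A * CFC.sqrt A :=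
    (CFC.sqrt_mul_sqrt_self A (nonneg_iff_posSemidef.mpr hA)).symm
  have h2 : (CFC.sqrt A * B * CFC.sqrt A).trace = (A * B).trace := by
    rw [Matrix.trace_mul_cycle, ← h1]
  rw [← h2]
  have h3 : (CFC.sqrt A * B * CFC.sqrt A).PosSemidef := by
    have := hB.mul_mul_conjTranspose_same (CFC.sqrt A)
    rwa [hs.1.eq] at this
  exact psd_trace_re_nonneg h3

lemma trace_conj_mul {U : Matrix m m ℂ} (hU : U ∈ Matrix.unitaryGroup m ℂ)
    (f : m → ℂ) (M : Matrix m m ℂ) :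
    ((U * diagonal f * star U) * M).trace
      = ∑ i, f i * (star U * M * U) i i := by
  have e1 : (U * diagonal f * star U) * M = (U * diagonal f) * (star U * M) := by
    simp only [Matrix.mul_assoc]
  have e2 : (star U * M) * (U * diagonal f) = (star U * M * U) * diagonal f := by
    simp only [Matrix.mul_assoc]
  rw [e1, Matrix.trace_mul_comm, e2, Matrix.trace_mul_comm]
  simp [Matrix.trace, Matrix.diag, Matrix.diagonal_mul]

lemma one_eq_conj {U : Matrix m m ℂ} (hU : U ∈ Matrix.unitaryGroup m ℂ) :
    (1 : Matrix m m ℂ) = U * diagonal (fun _ => (1 : ℂ)) * star U := by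
  rw [Matrix.diagonal_one, Matrix.mul_one, Matrix.mem_unitaryGroup_iff.mp hU]

lemma traceNorm_nonneg (A : Matrix m m ℂ) : 0 ≤ traceNorm A :=
  Finset.sum_nonneg fun i _ => Real.sqrt_nonneg _

lemma trace_hermitian_re {A : Matrix m m ℂ} (hA : A.IsHermitian) :
    (A.trace).re = ∑ i, hA.eigenvalues i := by
  have h : A.trace = ∑ i, ((hA.eigenvalues i : ℝ) : ℂ) := by
    conv_lhs => rw [spectral' hA]
    rw [trace_conj (hA.eigenvectorUnitary).2]
  rw [h, ← Complex.ofReal_sum, Complex.ofReal_re]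

lemma traceNorm_psd_eq {A : Matrix m m ℂ} (hA : A.PosSemidef) :
    traceNorm A = (A.trace).re := by
  rw [traceNorm_eq_sum_abs hA.1, trace_hermitian_re hA.1]
  exact Finset.sum_congr rfl fun i _ => abs_of_nonneg (hA.eigenvalues_nonneg i)

lemma re_trace_mul_le_traceNorm {A M : Matrix m m ℂ} (hA : A.IsHermitian)
    (h1 : (1 - M).PosSemidef) (h2 : (1 + M).PosSemidef) :
    ((A * M).trace).re ≤ traceNorm A := by
  set U := (hA.eigenvectorUnitary : Matrix m m ℂ) with hUdef
  have hU : U ∈ Matrix.unitaryGroup m ℂ := (hA.eigenvectorUnitary).2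
  have hU1 : star U * U = 1 := Matrix.mem_unitaryGroup_iff'.mp hU
  set N := star U * M * U with hN
  have key : (A * M).trace = ∑ i, ((hA.eigenvalues i : ℝ) : ℂ) * N i i := by
    conv_lhs => rw [spectral' hA]
    exact trace_conj_mul hU _ M
  have hconj : ∀ (i : m), 0 ≤ ((1:Matrix m m ℂ) - N) i i ∧ 0 ≤ ((1:Matrix m m ℂ) + N) i i := by
    intro i
    have c1 := (h1.conjTranspose_mul_mul_same U).2
    have c2 := (h2.conjTranspose_mul_mul_same U).2
    have e1 : Uᴴ * (1 - M) * U = 1 - N := by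
      rw [Matrix.mul_sub, Matrix.mul_one, Matrix.sub_mul, ← Matrix.star_eq_conjTranspose, hU1]
    have e2 : Uᴴ * (1 + M) * U = 1 + N := by
      rw [Matrix.mul_add, Matrix.mul_one, Matrix.add_mul, ← Matrix.star_eq_conjTranspose, hU1]
    have p1 : ((1:Matrix m m ℂ) - N).PosSemidef := e1 ▸ h1.conjTranspose_mul_mul_same U
    have p2 : ((1:Matrix m m ℂ) + N).PosSemidef := e2 ▸ h2.conjTranspose_mul_mul_same U
    exact ⟨psd_diag_nonneg p1 i, psd_diag_nonneg p2 i⟩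
  have hNre : ∀ i, |(N i i).re| ≤ 1 := by
    intro i
    obtain ⟨hi1, hi2⟩ := hconj i
    rw [Complex.nonneg_iff] at hi1 hi2
    have b1 := hi1.1
    have b2 := hi2.1
    simp only [Matrix.sub_apply, Matrix.add_apply, Matrix.one_apply_eq, Complex.sub_re,
      Complex.add_re, Complex.one_re] at b1 b2
    rw [abs_le]
    constructor <;> linarith
  rw [key, traceNorm_eq_sum_abs hA, Complex.re_sum]
  apply Finset.sum_le_sum
  intro i _
  have : (((hA.eigenvalues i : ℝ) : ℂ) * N i i).re = hA.eigenvalues i * (N i i).re := by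
    rw [Complex.re_ofReal_mul]
  rw [this]
  calc hA.eigenvalues i * (N i i).re ≤ |hA.eigenvalues i * (N i i).re| := le_abs_self _
    _ = |hA.eigenvalues i| * |(N i i).re| := abs_mul _ _
    _ ≤ |hA.eigenvalues i| * 1 := by
        exact mul_le_mul_of_nonneg_left (hNre i) (abs_nonneg _)
    _ = |hA.eigenvalues i| := mul_one _
lemma traceNorm_le_of_add_psd {A B : Matrix m m ℂ} (hA : A.IsHermitian)
    (hB : B.PosSemidef) (hAB : (A + B).PosSemidef) :
    traceNorm A ≤ (A.trace).re + 2 * (B.trace).re := by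
  set U := (hA.eigenvectorUnitary : Matrix m m ℂ) with hUdef
  have hU : U ∈ Matrix.unitaryGroup m ℂ := (hA.eigenvectorUnitary).2
  set lam := hA.eigenvalues with hlam
  set chi : m → ℝ := fun i => if lam i < 0 then (1:ℝ) else 0 with hchi
  set N := U * diagonal (fun i => ((chi i : ℝ) : ℂ)) * star U with hN
  have hNpsd : N.PosSemidef := conj_psd hU (fun i => by by_cases h : lam i < 0 <;> simp [hchi, h])
  have hN1 : ((1:Matrix m m ℂ) - N).PosSemidef := by
    have e : (1:Matrix m m ℂ) - N = U * diagonal (fun i => ((1 - chi i : ℝ) : ℂ)) * star U := by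
      rw [one_eq_conj hU, hN, ← Matrix.sub_mul, ← Matrix.mul_sub, Matrix.diagonal_sub]
      congr 2
      funext i
      push_cast
      ring
    rw [e]
    exact conj_psd hU (fun i => by by_cases h : lam i < 0 <;> simp [hchi, h])
  have hAN : ((A * N).trace).re = ∑ i, (if lam i < 0 then lam i else 0) := by
    have e : A * N = U * diagonal (fun i => ((lam i : ℝ) : ℂ) * ((chi i : ℝ) : ℂ)) * star U := by
      conv_lhs => rw [spectral' hA, hN]
      rw [conj_mul_conj hU]
    rw [e, trace_conj hU]
    have : ∀ i : m, (((lam i : ℝ) : ℂ) * ((chi i : ℝ) : ℂ)) = (((if lam i < 0 then lam i else 0 : ℝ)) : ℂ) := by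
      intro i
      by_cases h : lam i < 0 <;> simp [hchi, h]
    rw [Finset.sum_congr rfl fun i _ => this i, ← Complex.ofReal_sum, Complex.ofReal_re]
  have h1 : 0 ≤ (((A + B) * N).trace).re := trace_mul_psd_re_nonneg hAB hNpsd
  have h2 : 0 ≤ ((B * (1 - N)).trace).re := by
    have := trace_mul_psd_re_nonneg hB hN1
    exact this
  have e1 : ((A + B) * N).trace = (A * N).trace + (B * N).trace := by
    rw [Matrix.add_mul, Matrix.trace_add]
  have e2 : (B * (1 - N)).trace = B.trace - (B * N).trace := by
    rw [Matrix.mul_sub, Matrix.mul_one, Matrix.trace_sub]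
  rw [e1] at h1
  rw [e2] at h2
  simp only [Complex.add_re, Complex.sub_re] at h1 h2
  have habs : traceNorm A = (∑ i, lam i) - 2 * ∑ i, (if lam i < 0 then lam i else 0) := by
    rw [traceNorm_eq_sum_abs hA, Finset.mul_sum, ← Finset.sum_sub_distrib]
    apply Finset.sum_congr rfl
    intro i _
    by_cases h : lam i < 0
    · simp only [h, if_pos]
      rw [abs_of_neg h]; ring
    · simp only [h, if_neg, Not.intro]
      rw [abs_of_nonneg (not_lt.mp h)]
      simp
  rw [habs, ← trace_hermitian_re hA]
  rw [hAN] at h1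
  linarith

lemma star_dot_eq (u x : m → ℂ) :
    dotProduct (star x) u = star (dotProduct (star u) x) := by
  simp only [dotProduct, star_sum, star_mul', star_star, Pi.star_apply]
  exact Finset.sum_congr rfl fun k _ => mul_comm _ _

lemma vecMulVec_star_herm (u : m → ℂ) : (Matrix.vecMulVec u (star u)).IsHermitian := by
  apply Matrix.IsHermitian.ext
  intro i j
  simp only [Matrix.vecMulVec_apply, Pi.star_apply, star_mul', star_star]
  ring

lemma vecMulVec_star_mulVec (u x : m → ℂ) :
    (Matrix.vecMulVec u (star u)) *ᵥ x = fun k => u k * (dotProduct (star u) x) := by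
  funext k
  simp only [Matrix.mulVec, Matrix.vecMulVec_apply, dotProduct, Pi.star_apply,
    Finset.mul_sum]
  exact Finset.sum_congr rfl fun l _ => by ring

lemma dot_vecMulVec_star (u x : m → ℂ) :
    dotProduct (star x) ((Matrix.vecMulVec u (star u)) *ᵥ x)
      = ((Complex.normSq (dotProduct (star u) x) : ℝ) : ℂ) := by
  rw [vecMulVec_star_mulVec]
  set z := dotProduct (star u) x with hz
  have : dotProduct (star x) (fun k => u k * z) = (dotProduct (star x) u) * z := by
    simp only [dotProduct, Finset.sum_mul]
    exact Finset.sum_congr rfl fun k _ => by ring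
  rw [this, star_dot_eq, Complex.normSq_eq_conj_mul_self]
  rfl

lemma trace_vecMulVec_star (u : m → ℂ) :
    (Matrix.vecMulVec u (star u)).trace = ((∑ k, Complex.normSq (u k) : ℝ) : ℂ) := by
  simp only [Matrix.trace, Matrix.diag, Matrix.vecMulVec_apply, Pi.star_apply]
  push_cast
  exact Finset.sum_congr rfl fun k _ => by
    rw [show star (u k) = (starRingEnd ℂ) (u k) from rfl, Complex.mul_conj]

lemma normSq_dot_le (w y : m → ℂ) :
    Complex.normSq (dotProduct (star w) y)
      ≤ (∑ k, Complex.normSq (w k)) * (∑ k, Complex.normSq (y k)) := by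
  let w' : EuclideanSpace ℂ m := WithLp.toLp 2 w
  let y' : EuclideanSpace ℂ m := WithLp.toLp 2 y
  have hinner : (inner ℂ w' y' : ℂ) = dotProduct (star w) y := by
    simp only [PiLp.inner_apply, dotProduct, Pi.star_apply, RCLike.inner_apply]
    exact Finset.sum_congr rfl fun k _ => mul_comm _ _
  have hcs := norm_inner_le_norm (𝕜 := ℂ) w' y'
  have hw : ‖w'‖ ^ 2 = ∑ k, Complex.normSq (w k) := by
    rw [EuclideanSpace.norm_eq, Real.sq_sqrt (Finset.sum_nonneg fun k _ => sq_nonneg _)]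
    exact Finset.sum_congr rfl fun k _ => by
      rw [Complex.normSq_eq_norm_sq]
  have hy : ‖y'‖ ^ 2 = ∑ k, Complex.normSq (y k) := by
    rw [EuclideanSpace.norm_eq, Real.sq_sqrt (Finset.sum_nonneg fun k _ => sq_nonneg _)]
    exact Finset.sum_congr rfl fun k _ => by
      rw [Complex.normSq_eq_norm_sq]
  have h2 : ‖(inner ℂ w' y' : ℂ)‖ ^ 2 ≤ (‖w'‖ * ‖y'‖) ^ 2 := by
    apply sq_le_sq' _ hcs
    have := norm_nonneg (inner ℂ w' y' : ℂ)
    nlinarith [norm_nonneg w', norm_nonneg y']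
  rw [hinner] at h2
  rw [mul_pow, hw, hy] at h2
  calc Complex.normSq (dotProduct (star w) y)
      = ‖dotProduct (star w) y‖ ^ 2 := by
        rw [Complex.normSq_eq_norm_sq]
    _ ≤ _ := h2

lemma conj_smul {U : Matrix m m ℂ} (c : ℂ) (f : m → ℂ) :
    c • (U * diagonal f * star U) = U * diagonal (fun i => c * f i) * star U := by
  have : diagonal (fun i => c * f i) = c • diagonal f := by
    rw [← Matrix.diagonal_smul]
    rfl
  rw [this]
  rw [show U * (c • diagonal f) * star U = c • (U * diagonal f * star U) by
    rw [mul_smul_comm, smul_mul_assoc]]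

lemma scalar_key {e p g t s a A1 B1 : ℝ} (hg : 0 < g) (ht : 0 < t) (hp : 0 < p)
    (ha : 0 ≤ a) (hA1 : 0 ≤ A1) (hB1 : 0 ≤ B1) (hA1a : A1 ^ 2 ≤ p * a)
    (ht1 : t * (1 + g) * p = e) (hs : s = t * (1 + 1 / g)) :
    t * (A1 + B1) ^ 2 ≤ e * a + s * B1 ^ 2 := by
  have hginv : g * (1 / g) = 1 := mul_one_div_cancel hg.ne'
  have key : (A1 + B1) ^ 2 ≤ (1 + g) * A1 ^ 2 + (1 + 1 / g) * B1 ^ 2 := by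
    have h := sq_nonneg (g * A1 - B1)
    have hginv' : 0 < 1 / g := by positivity
    nlinarith [mul_pos hg hg, sq_nonneg (g * A1 - B1)]
  have step1 : t * (A1 + B1) ^ 2 ≤ t * ((1 + g) * A1 ^ 2) + t * ((1 + 1 / g) * B1 ^ 2) := by
    nlinarith
  have step2 : t * ((1 + g) * A1 ^ 2) ≤ e * a := by
    have : t * (1 + g) * A1 ^ 2 ≤ t * (1 + g) * (p * a) := by
      apply mul_le_mul_of_nonneg_left hA1a
      positivity
    calc t * ((1 + g) * A1 ^ 2) = t * (1 + g) * A1 ^ 2 := by ring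
      _ ≤ t * (1 + g) * (p * a) := this
      _ = (t * (1 + g) * p) * a := by ring
      _ = e * a := by rw [ht1]
  have step3 : t * ((1 + 1 / g) * B1 ^ 2) = s * B1 ^ 2 := by rw [hs]; ring
  linarith

lemma scalar_two {p g t s : ℝ} (hp : 1 / 2 < p) (hp1 : p ≤ 1)
    (hg : g = 2 * (1 - p) / (2 * p - 1) + 1) (ht : 0 < t)
    (hs : s = t * (1 + 1 / g)) : 2 * s * (1 - p) < t := by
  have hd : 0 < 2 * p - 1 := by linarith
  have hq : 0 ≤ 1 - p := by linarith
  have hg0 : 0 < g := by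
    rw [hg]; positivity
  have hgd : g * (2 * p - 1) = 2 * (1 - p) + (2 * p - 1) := by
    rw [hg]; field_simp
  have hginv : g * (1 / g) = 1 := mul_one_div_cancel hg0.ne'
  have key : 2 * (1 + 1 / g) * (1 - p) < 1 := by
    have h1 : 0 < 1 / g := by positivity
    nlinarith [mul_pos hg0 hd]
  calc 2 * s * (1 - p) = t * (2 * (1 + 1 / g) * (1 - p)) := by rw [hs]; ring
    _ < t * 1 := by exact mul_lt_mul_of_pos_left key ht
    _ = t := mul_one t

lemma dot_star_self (y : m → ℂ) :
    dotProduct (star y) y = ((∑ k, Complex.normSq (y k) : ℝ) : ℂ) := by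
  push_cast
  simp only [dotProduct, Pi.star_apply]
  exact Finset.sum_congr rfl fun k _ => by
    rw [Complex.normSq_eq_conj_mul_self]; rfl


lemma diag_real_herm (f : m → ℝ) : (diagonal (fun i => (f i : ℂ))).IsHermitian := by
  apply Matrix.isHermitian_diagonal_of_self_adjoint
  funext i
  simp [Complex.conj_ofReal]

lemma conj_herm (U : Matrix m m ℂ) (f : m → ℝ) :
    (U * diagonal (fun i => (f i : ℂ)) * star U).IsHermitian := by
  have := Matrix.isHermitian_mul_mul_conjTranspose U (diag_real_herm f)
  rw [Matrix.star_eq_conjTranspose]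
  exact this


end Aux



theorem stmt_16 {n : ℕ} (ρ : Matrix (Fin n) (Fin n) ℂ)
    (hρ : ρ.PosSemidef) (hρtr : ρ.trace = 1) :
    sInf {r : ℝ | ∃ X : Matrix (Fin n) (Fin n) ℂ, X.IsDiag ∧ X.PosSemidef ∧
        r = traceNorm (ρ - X)} = 1 ↔
      ∀ j : Fin n, ((rangeProj hρ.1) j j).re ≤ 1 / 2 := by
  classical
  set U : Matrix (Fin n) (Fin n) ℂ := (hρ.1.eigenvectorUnitary : Matrix (Fin n) (Fin n) ℂ) with hUdef
  have hU : U ∈ Matrix.unitaryGroup (Fin n) ℂ := (hρ.1.eigenvectorUnitary).2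
  set lam : Fin n → ℝ := hρ.1.eigenvalues with hlamdef
  set chi : Fin n → ℝ := fun i => if lam i ≠ 0 then (1:ℝ) else 0 with hchidef
  set P : Matrix (Fin n) (Fin n) ℂ := rangeProj hρ.1 with hPsetdef
  have hPdef : P = U * diagonal (fun i => ((chi i : ℝ) : ℂ)) * star U := by
    rw [hPsetdef]
    unfold rangeProj
    have he : (fun i => if hρ.1.eigenvalues i ≠ 0 then (1:ℂ) else 0)
        = fun i => ((chi i : ℝ) : ℂ) := by
      funext i
      by_cases h : lam i = 0 <;> simp [hchidef, ← hlamdef, h]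
    rw [he]
  have hPpsd : P.PosSemidef := by
    rw [hPdef]
    exact Aux.conj_psd hU fun i => by by_cases h : lam i = 0 <;> simp [hchidef, h]
  have hPherm : P.IsHermitian := hPpsd.1
  have hP1 : (1 : Matrix (Fin n) (Fin n) ℂ) - P
      = U * diagonal (fun i => ((1 - chi i : ℝ) : ℂ)) * star U := by
    rw [hPdef, Aux.one_eq_conj hU, ← Matrix.sub_mul, ← Matrix.mul_sub,
      Matrix.diagonal_sub]
    congr 2
    funext i
    push_cast
    ring
  have hP1psd : ((1 : Matrix (Fin n) (Fin n) ℂ) - P).PosSemidef := by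
    rw [hP1]
    exact Aux.conj_psd hU fun i => by by_cases h : lam i = 0 <;> simp [hchidef, h]
  have hPP : P * P = P := by
    rw [hPdef, Aux.conj_mul_conj hU]
    have he : (fun i => ((chi i : ℝ) : ℂ) * ((chi i : ℝ) : ℂ)) = fun i => ((chi i : ℝ) : ℂ) := by
      funext i
      by_cases h : lam i = 0 <;> simp [hchidef, h]
    rw [he]
  have hρP : ρ * P = ρ := by
    rw [hPdef]
    conv_lhs => rw [Aux.spectral' hρ.1]
    conv_rhs => rw [Aux.spectral' hρ.1]
    rw [Aux.conj_mul_conj hU]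
    have he : (fun i => ((hρ.1.eigenvalues i : ℝ) : ℂ) * ((chi i : ℝ) : ℂ))
        = fun i => ((hρ.1.eigenvalues i : ℝ) : ℂ) := by
      funext i
      by_cases h : lam i = 0 <;> simp [hchidef, ← hlamdef, h]
    rw [he]
  have hmem1 : (1:ℝ) ∈ {r : ℝ | ∃ X : Matrix (Fin n) (Fin n) ℂ, X.IsDiag ∧ X.PosSemidef ∧
      r = traceNorm (ρ - X)} := by
    refine ⟨0, Matrix.isDiag_zero, Matrix.PosSemidef.zero, ?_⟩
    rw [sub_zero, Aux.traceNorm_psd_eq hρ, hρtr]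
    simp
  constructor
  · -- sInf = 1 → ∀ j, P j j ≤ 1/2
    intro hinf j
    by_contra hcon
    push_neg at hcon
    set p : ℝ := (P j j).re with hpdef
    have hp : 1/2 < p := hcon
    have hp1 : p ≤ 1 := by
      have h0 := Aux.psd_diag_nonneg hP1psd j
      rw [Complex.nonneg_iff] at h0
      have := h0.1
      simpa [Matrix.sub_apply, Matrix.one_apply_eq] using this
    have hsum : ∑ i, lam i = 1 := by
      have h := Aux.trace_hermitian_re hρ.1
      rw [hρtr] at h
      simpa using h.symm
    have hT : (Finset.univ.filter fun i => lam i ≠ 0).Nonempty := by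
      by_contra hTc
      rw [Finset.not_nonempty_iff_eq_empty] at hTc
      have hz : ∀ i, lam i = 0 := by
        intro i
        by_contra hi
        have hmm : i ∈ Finset.univ.filter fun i => lam i ≠ 0 :=
          Finset.mem_filter.mpr ⟨Finset.mem_univ _, hi⟩
        rw [hTc] at hmm
        exact absurd hmm (Finset.notMem_empty i)
      rw [Finset.sum_congr rfl fun i _ => hz i] at hsum
      simp at hsum
    set ε : ℝ := (Finset.univ.filter fun i => lam i ≠ 0).inf' hT lam with hεdef
    have hε : 0 < ε := by
      rw [hεdef, Finset.lt_inf'_iff]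
      intro i hi
      have hi' := (Finset.mem_filter.mp hi).2
      exact lt_of_le_of_ne (hρ.eigenvalues_nonneg i) (Ne.symm hi')
    have hεle : ∀ i, lam i ≠ 0 → ε ≤ lam i := by
      intro i hi
      rw [hεdef]
      exact Finset.inf'_le lam (Finset.mem_filter.mpr ⟨Finset.mem_univ i, hi⟩)
    set γ : ℝ := 2 * (1 - p) / (2 * p - 1) + 1 with hγdef
    have hγ : 0 < γ := by
      rw [hγdef]
      have h1 : 0 < 2 * p - 1 := by linarith
      have h2 : 0 ≤ 1 - p := by linarith
      positivity
    have hppos : 0 < p := by linarith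
    set t : ℝ := ε / ((1 + γ) * p) with htdef
    have ht : 0 < t := by rw [htdef]; positivity
    have ht1 : t * (1 + γ) * p = ε := by
      rw [htdef]
      field_simp
    set s : ℝ := t * (1 + 1 / γ) with hsdef
    have hs : 0 < s := by rw [hsdef]; positivity
    set xj : Fin n → ℝ := fun i => if i = j then t else 0 with hxjdef
    set X : Matrix (Fin n) (Fin n) ℂ := diagonal (fun i => ((xj i : ℝ) : ℂ)) with hXdef
    have hXpsd : X.PosSemidef := by
      rw [hXdef]
      apply Matrix.PosSemidef.diagonal
      intro i
      refine Complex.zero_le_real.mpr ?_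
      rw [hxjdef]
      dsimp only
      split
      · exact ht.le
      · exact le_refl 0
    have hXherm : X.IsHermitian := Aux.diag_real_herm xj
    set u : Fin n → ℂ := fun k => ((1 : Matrix (Fin n) (Fin n) ℂ) - P) k j with hudef
    set V : Matrix (Fin n) (Fin n) ℂ := Matrix.vecMulVec u (star u) with hVdef
    set B : Matrix (Fin n) (Fin n) ℂ := (s : ℂ) • V with hBdef
    have hBherm : B.IsHermitian := by
      rw [hBdef, Matrix.IsHermitian, Matrix.conjTranspose_smul, (Aux.vecMulVec_star_herm u).eq]
      congr 1
      simp [Complex.conj_ofReal]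
    have hBpsd : B.PosSemidef := by
      refine Matrix.PosSemidef.of_dotProduct_mulVec_nonneg hBherm ?_
      intro x
      rw [hBdef, Matrix.smul_mulVec, dotProduct_smul, hVdef,
        Aux.dot_vecMulVec_star, smul_eq_mul, ← Complex.ofReal_mul]
      exact Complex.zero_le_real.mpr (mul_nonneg hs.le (Complex.normSq_nonneg _))
    set eP : Matrix (Fin n) (Fin n) ℂ := U * diagonal (fun i => ((ε * chi i : ℝ) : ℂ)) * star U
      with hePdef
    have heP : eP = (ε : ℂ) • P := by
      rw [hePdef, hPdef, Aux.conj_smul]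
      have he : (fun i => (ε : ℂ) * ((chi i : ℝ) : ℂ)) = fun i => ((ε * chi i : ℝ) : ℂ) := by
        funext i
        push_cast
        ring
      rw [he]
    have hρeP : (ρ - eP).PosSemidef := by
      have e : ρ - eP = U * diagonal (fun i => ((lam i - ε * chi i : ℝ) : ℂ)) * star U := by
        have e2 : (fun i => ((lam i - ε * chi i : ℝ) : ℂ))
            = fun i => ((hρ.1.eigenvalues i : ℝ) : ℂ) - ((ε * chi i : ℝ) : ℂ) := by
          funext i
          simp only [← hlamdef]
          push_cast
          ring
        rw [hePdef]
        conv_lhs => rw [Aux.spectral' hρ.1]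
        rw [e2, ← Matrix.diagonal_sub, Matrix.mul_sub, Matrix.sub_mul, ← hUdef]
      rw [e]
      refine Aux.conj_psd hU fun i => ?_
      by_cases h : lam i = 0
      · simp [hchidef, h]
      · have hle := hεle i h
        have hchi : chi i = 1 := by simp [hchidef, h]
        rw [hchi]
        linarith
    have hdotP : ∀ x : Fin n → ℂ, dotProduct (star x) (P *ᵥ x)
        = ((∑ k, Complex.normSq ((P *ᵥ x) k) : ℝ) : ℂ) := by
      intro x
      have h1 : P *ᵥ x = P *ᵥ (P *ᵥ x) := by rw [Matrix.mulVec_mulVec, hPP]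
      conv_lhs => rw [h1]
      rw [Matrix.dotProduct_mulVec]
      have h2 : Matrix.vecMul (star x) P = star (P *ᵥ x) := by
        rw [Matrix.star_mulVec, hPherm.eq]
      rw [h2]
      exact Aux.dot_star_self _
    have hzx : ∀ x : Fin n → ℂ, dotProduct (star u) x = x j - (P *ᵥ x) j := by
      intro x
      have h1 : dotProduct (star u) x = ((1 - P) *ᵥ x) j := by
        simp only [Matrix.mulVec, dotProduct, Pi.star_apply, hudef]
        apply Finset.sum_congr rfl
        intro k _
        congr 1
        exact hP1psd.1.apply j k
      rw [h1, Matrix.sub_mulVec, Matrix.one_mulVec]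
      simp
    have hwsum : (∑ k, Complex.normSq (P k j)) = p := by
      have hc : ((∑ k, Complex.normSq (P k j) : ℝ) : ℂ) = P j j := by
        push_cast
        calc (∑ k, (Complex.normSq (P k j) : ℂ))
            = ∑ k, Pᴴ j k * P k j := by
              refine Finset.sum_congr rfl fun k _ => ?_
              rw [Complex.normSq_eq_conj_mul_self, Matrix.conjTranspose_apply]
              rfl
          _ = (Pᴴ * P) j j := (Matrix.mul_apply).symm
          _ = (P * P) j j := by rw [hPherm.eq]
          _ = P j j := by rw [hPP]
      have hr := congrArg Complex.re hc
      rw [Complex.ofReal_re] at hr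
      rw [hr, hpdef]
    have hQQ : ((1 : Matrix (Fin n) (Fin n) ℂ) - P) * (1 - P) = 1 - P := by
      rw [Matrix.mul_sub, Matrix.mul_one, Matrix.sub_mul, Matrix.one_mul, hPP, sub_self,
        sub_zero]
    have husum : (∑ k, Complex.normSq (u k)) = 1 - p := by
      have hc : ((∑ k, Complex.normSq (u k) : ℝ) : ℂ)
          = ((1 : Matrix (Fin n) (Fin n) ℂ) - P) j j := by
        push_cast
        calc (∑ k, (Complex.normSq (u k) : ℂ))
            = ∑ k, ((1 : Matrix (Fin n) (Fin n) ℂ) - P)ᴴ j k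
                * ((1 : Matrix (Fin n) (Fin n) ℂ) - P) k j := by
              refine Finset.sum_congr rfl fun k _ => ?_
              rw [hudef, Complex.normSq_eq_conj_mul_self, Matrix.conjTranspose_apply]
              rfl
          _ = (((1 : Matrix (Fin n) (Fin n) ℂ) - P)ᴴ
                * ((1 : Matrix (Fin n) (Fin n) ℂ) - P)) j j := (Matrix.mul_apply).symm
          _ = ((1 : Matrix (Fin n) (Fin n) ℂ) - P) j j := by rw [hP1psd.1.eq, hQQ]
      have hr := congrArg Complex.re hc
      rw [Complex.ofReal_re] at hr
      rw [hr]
      simp [Matrix.sub_apply, Matrix.one_apply_eq, hpdef]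
    have hcs : ∀ x : Fin n → ℂ, Complex.normSq ((P *ᵥ x) j)
        ≤ p * (∑ k, Complex.normSq ((P *ᵥ x) k)) := by
      intro x
      have h1 : (P *ᵥ x) j = dotProduct (star (fun k => P k j)) (P *ᵥ x) := by
        have h2 : (P *ᵥ x) j = (P *ᵥ (P *ᵥ x)) j := by rw [Matrix.mulVec_mulVec, hPP]
        rw [h2]
        simp only [Matrix.mulVec, dotProduct, Pi.star_apply]
        apply Finset.sum_congr rfl
        intro k _
        congr 1
        exact (hPherm.apply j k).symm
      rw [h1]
      have hle := Aux.normSq_dot_le (fun k => P k j) (P *ᵥ x)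
      rw [hwsum] at hle
      exact hle
    have hCpsd : (eP + B - X).PosSemidef := by
      refine Matrix.PosSemidef.of_dotProduct_mulVec_nonneg ?_ ?_
      · exact ((Aux.conj_herm U (fun i => ε * chi i)).add hBherm).sub hXherm
      · intro x
        set a : ℝ := ∑ k, Complex.normSq ((P *ᵥ x) k) with hadef
        set z : ℂ := dotProduct (star u) x with hzdef
        have t1 : dotProduct (star x) (eP *ᵥ x) = ((ε * a : ℝ) : ℂ) := by
          rw [heP, Matrix.smul_mulVec, dotProduct_smul, hdotP x, smul_eq_mul,
            ← Complex.ofReal_mul]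
        have t2 : dotProduct (star x) (B *ᵥ x) = ((s * Complex.normSq z : ℝ) : ℂ) := by
          rw [hBdef, Matrix.smul_mulVec, dotProduct_smul, hVdef,
            Aux.dot_vecMulVec_star, smul_eq_mul, ← Complex.ofReal_mul, hzdef]
        have t3 : dotProduct (star x) (X *ᵥ x)
            = ((t * Complex.normSq (x j) : ℝ) : ℂ) := by
          have hXv : X *ᵥ x = fun k => ((xj k : ℝ) : ℂ) * x k := by
            funext k
            rw [hXdef]
            exact Matrix.mulVec_diagonal _ _ _
          rw [hXv]
          simp only [dotProduct, Pi.star_apply]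
          rw [Finset.sum_eq_single j]
          · rw [hxjdef]
            simp only [if_pos rfl]
            push_cast
            rw [Complex.normSq_eq_conj_mul_self]
            simp only [Complex.star_def]
            ring
          · intro b _ hb
            rw [hxjdef]
            simp [if_neg hb]
          · intro hj
            exact absurd (Finset.mem_univ j) hj
        have expand : dotProduct (star x) ((eP + B - X) *ᵥ x)
            = ((ε * a + s * Complex.normSq z - t * Complex.normSq (x j) : ℝ) : ℂ) := by
          rw [Matrix.sub_mulVec, Matrix.add_mulVec, dotProduct_sub,
            dotProduct_add, t1, t2, t3]
          push_cast
          ring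
        rw [expand, Complex.zero_le_real]
        have hxjeq : x j = (P *ᵥ x) j + z := by
          rw [hzdef, hzx x]
          ring
        set A1 : ℝ := ‖(P *ᵥ x) j‖ with hA1def
        set B1 : ℝ := ‖z‖ with hB1def
        have hnormxj : Complex.normSq (x j) ≤ (A1 + B1) ^ 2 := by
          rw [hxjeq, ← Complex.sq_norm]
          have habs : ‖(P *ᵥ x) j + z‖ ≤ A1 + B1 := by
            rw [hA1def, hB1def]
            exact norm_add_le _ _
          exact pow_le_pow_left₀ (norm_nonneg _) habs 2
        have hA1sq : A1 ^ 2 ≤ p * a := by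
          rw [hA1def, Complex.sq_norm, hadef]
          exact hcs x
        have ha0 : 0 ≤ a := by
          rw [hadef]
          exact Finset.sum_nonneg fun k _ => Complex.normSq_nonneg _
        have hA1nn : 0 ≤ A1 := by rw [hA1def]; exact norm_nonneg _
        have hB1nn : 0 ≤ B1 := by rw [hB1def]; exact norm_nonneg _
        have hkey := Aux.scalar_key (A1 := A1) (B1 := B1) hγ ht hppos ha0 hA1nn hB1nn
          hA1sq ht1 hsdef
        have hBsq : B1 ^ 2 = Complex.normSq z := Complex.sq_norm z
        have hmul : t * Complex.normSq (x j) ≤ t * (A1 + B1) ^ 2 :=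
          mul_le_mul_of_nonneg_left hnormxj ht.le
        rw [hBsq] at hkey
        linarith
    have hABpsd : ((ρ - X) + B).PosSemidef := by
      have e : (ρ - X) + B = (ρ - eP) + (eP + B - X) := by abel
      rw [e]
      exact hρeP.add hCpsd
    have hbound := Aux.traceNorm_le_of_add_psd (hρ.1.sub hXherm) hBpsd hABpsd
    have htrρX : ((ρ - X).trace).re = 1 - t := by
      rw [Matrix.trace_sub, hρtr, hXdef, Matrix.trace_diagonal]
      have hsx : ∑ i, ((xj i : ℝ) : ℂ) = (t : ℂ) := by
        have hco : ∀ i : Fin n, ((xj i : ℝ) : ℂ) = if i = j then (t : ℂ) else 0 := by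
          intro i
          rw [hxjdef]
          by_cases h : i = j <;> simp [h]
        rw [Finset.sum_congr rfl fun i _ => hco i]
        simp
      rw [hsx]
      rw [Complex.sub_re, Complex.one_re, Complex.ofReal_re]
    have htrB : (B.trace).re = s * (1 - p) := by
      rw [hBdef, Matrix.trace_smul, hVdef, Aux.trace_vecMulVec_star, husum, smul_eq_mul,
        ← Complex.ofReal_mul, Complex.ofReal_re]
    have hlt : traceNorm (ρ - X) < 1 := by
      have h2 := Aux.scalar_two hp hp1 hγdef ht hsdef
      rw [htrρX, htrB] at hbound
      linarith
    have hmem2 : traceNorm (ρ - X) ∈ {r : ℝ | ∃ X : Matrix (Fin n) (Fin n) ℂ,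
        X.IsDiag ∧ X.PosSemidef ∧ r = traceNorm (ρ - X)} := by
      refine ⟨X, ?_, hXpsd, rfl⟩
      rw [hXdef]
      exact Matrix.isDiag_diagonal _
    have hbdd : BddBelow {r : ℝ | ∃ X : Matrix (Fin n) (Fin n) ℂ,
        X.IsDiag ∧ X.PosSemidef ∧ r = traceNorm (ρ - X)} := by
      refine ⟨0, ?_⟩
      rintro r ⟨Y, _, _, rfl⟩
      exact Aux.traceNorm_nonneg _
    have hle := csInf_le hbdd hmem2
    rw [hinf] at hle
    linarith
  · -- ∀ j, P j j ≤ 1/2 → sInf = 1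
    intro hp
    have hlow : ∀ r ∈ {r : ℝ | ∃ X : Matrix (Fin n) (Fin n) ℂ, X.IsDiag ∧ X.PosSemidef ∧
        r = traceNorm (ρ - X)}, (1:ℝ) ≤ r := by
      rintro r ⟨X, hXdiag, hXpsd, rfl⟩
      set M : Matrix (Fin n) (Fin n) ℂ := P + P - 1 with hMdef
      have h1M : ((1 : Matrix (Fin n) (Fin n) ℂ) - M).PosSemidef := by
        have e : (1 : Matrix (Fin n) (Fin n) ℂ) - M = (1 - P) + (1 - P) := by
          rw [hMdef]; abel
        rw [e]
        exact hP1psd.add hP1psd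
      have h2M : ((1 : Matrix (Fin n) (Fin n) ℂ) + M).PosSemidef := by
        have e : (1 : Matrix (Fin n) (Fin n) ℂ) + M = P + P := by
          rw [hMdef]; abel
        rw [e]
        exact hPpsd.add hPpsd
      have hkey := Aux.re_trace_mul_le_traceNorm (hρ.1.sub hXpsd.1) h1M h2M
      have hρM : ρ * M = ρ := by
        rw [hMdef, Matrix.mul_sub, Matrix.mul_add, Matrix.mul_one, hρP]
        abel
      have htXM : (X * M).trace = ∑ k, X k k * M k k := by
        rw [Matrix.trace]
        apply Finset.sum_congr rfl
        intro k _
        rw [Matrix.diag_apply, Matrix.mul_apply]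
        rw [Finset.sum_eq_single k]
        · intro b _ hb
          rw [hXdiag (Ne.symm hb), zero_mul]
        · intro hk
          exact absurd (Finset.mem_univ k) hk
      have hXMre : ((X * M).trace).re ≤ 0 := by
        rw [htXM, Complex.re_sum]
        apply Finset.sum_nonpos
        intro k _
        have hx := Aux.psd_diag_nonneg hXpsd k
        rw [Complex.nonneg_iff] at hx
        have hMkk : (M k k).re = 2 * (P k k).re - 1 := by
          rw [hMdef]
          simp [Matrix.add_apply, Matrix.sub_apply, Matrix.one_apply_eq]
          ring
        rw [Complex.mul_re, ← hx.2, zero_mul, sub_zero, hMkk]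
        apply mul_nonpos_of_nonneg_of_nonpos hx.1
        have := hp k
        linarith
      have htr : (((ρ - X) * M).trace).re = (ρ.trace).re - ((X * M).trace).re := by
        rw [Matrix.sub_mul, Matrix.trace_sub, Complex.sub_re, hρM]
      rw [htr, hρtr] at hkey
      simp only [Complex.one_re] at hkey
      linarith
    exact le_antisymm (csInf_le ⟨1, fun r hr => hlow r hr⟩ hmem1) (le_csInf ⟨1, hmem1⟩ hlow)
end

section
/- Let ρ be an n×n density matrix such that its modified trace distance of k-coherence equals 1 (equivalently, every k×k principal submatrix of the range projection of ρ has operator norm at most 1/2). Then rank(ρ) ≤ n(n + 1 − 2k)/(2(n − k)), for 1 ≤ k < n. -/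
open Matrix BigOperators

open scoped ComplexOrder
open Finset

/- ********** auxiliary lemmas ********** -/

lemma count_subsets {α : Type*} [Fintype α] [DecidableEq α] (t : Finset α) {k : ℕ}
    (htk : t.card ≤ k) :
    ((Finset.univ.powersetCard k).filter (fun s => t ⊆ s)).card
      = (Fintype.card α - t.card).choose (k - t.card) := by
  rw [show Fintype.card α - t.card = tᶜ.card from (Finset.card_compl t).symm,
    ← Finset.card_powersetCard (k - t.card) tᶜ]
  apply Finset.card_bij' (fun s _ => s \ t) (fun u _ => u ∪ t)
  · intro s hs
    simp only [mem_filter, Finset.mem_powersetCard] at hs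
    simp only [Finset.mem_powersetCard]
    exact ⟨fun x hx => by simp_all [Finset.mem_sdiff],
      by rw [Finset.card_sdiff_of_subset hs.2, hs.1.2]⟩
  · intro u hu
    simp only [Finset.mem_powersetCard] at hu
    have hdisj : Disjoint u t := by
      intro x hxu hxt y hy
      have := hu.1 (hxu hy)
      simp only [Finset.mem_compl] at this
      exact absurd (hxt hy) this
    simp only [mem_filter, Finset.mem_powersetCard]
    refine ⟨⟨Finset.subset_univ _, ?_⟩, Finset.subset_union_right⟩
    rw [Finset.card_union_of_disjoint hdisj, hu.2]
    omega
  · intro s hs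
    simp only [mem_filter, Finset.mem_powersetCard] at hs
    exact Finset.sdiff_union_of_subset hs.2
  · intro u hu
    simp only [Finset.mem_powersetCard] at hu
    rw [Finset.union_sdiff_right, Finset.sdiff_eq_self_iff_disjoint]
    intro x hxu hxt y hy
    have := hu.1 (hxu hy)
    simp only [Finset.mem_compl] at this
    exact absurd (hxt hy) this

lemma sum_subsets_singleton {n k : ℕ} (hk : 1 ≤ k) (f : Fin n → ℝ) :
    ∑ s ∈ powersetCard k (univ : Finset (Fin n)), ∑ i ∈ s, f i
      = ((n-1).choose (k-1) : ℝ) * ∑ i, f i := by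
  have h1 : ∀ s ∈ powersetCard k (univ : Finset (Fin n)),
      ∑ i ∈ s, f i = ∑ i : Fin n, if i ∈ s then f i else 0 := by
    intro s _
    rw [Finset.sum_ite_mem, Finset.univ_inter]
  rw [Finset.sum_congr rfl h1, Finset.sum_comm]
  rw [Finset.mul_sum]
  refine Finset.sum_congr rfl fun i _ => ?_
  rw [← Finset.sum_filter, Finset.sum_const, nsmul_eq_mul]
  congr 1
  have : (powersetCard k (univ : Finset (Fin n))).filter (fun s => i ∈ s)
      = (powersetCard k (univ : Finset (Fin n))).filter (fun s => {i} ⊆ s) := by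
    apply Finset.filter_congr
    intro s _
    simp [Finset.singleton_subset_iff]
  rw [this, count_subsets _ (by simpa using hk)]
  simp [Fintype.card_fin]

lemma sum_subsets_pair {n k : ℕ} (F : Fin n → Fin n → ℝ) :
    ∑ s ∈ powersetCard k (univ : Finset (Fin n)), ∑ i ∈ s, ∑ j ∈ s.erase i, F i j
      = (if 2 ≤ k then ((n-2).choose (k-2) : ℝ) else 0)
          * ∑ i, ∑ j ∈ Finset.univ.erase i, F i j := by
  have h1 : ∀ s ∈ powersetCard k (univ : Finset (Fin n)),
      ∑ i ∈ s, ∑ j ∈ s.erase i, F i j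
        = ∑ i : Fin n, ∑ j ∈ Finset.univ.erase i, if i ∈ s ∧ j ∈ s then F i j else 0 := by
    intro s _
    rw [show ∑ i ∈ s, ∑ j ∈ s.erase i, F i j
        = ∑ i : Fin n, if i ∈ s then ∑ j ∈ s.erase i, F i j else 0 by
      rw [Finset.sum_ite_mem, Finset.univ_inter]]
    refine Finset.sum_congr rfl fun i _ => ?_
    by_cases his : i ∈ s
    · simp only [his, if_true, true_and]
      rw [← Finset.sum_filter]
      apply Finset.sum_congr
      · ext j
        simp only [Finset.mem_erase, Finset.mem_filter, Finset.mem_univ, true_and]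
        tauto
      · intros; rfl
    · simp [his]
  rw [Finset.sum_congr rfl h1, Finset.sum_comm]
  rw [Finset.mul_sum]
  refine Finset.sum_congr rfl fun i _ => ?_
  rw [Finset.sum_comm, Finset.mul_sum]
  refine Finset.sum_congr rfl fun j hj => ?_
  have hij : j ≠ i := (Finset.mem_erase.1 hj).1
  rw [← Finset.sum_filter, Finset.sum_const, nsmul_eq_mul]
  congr 1
  have heq : (powersetCard k (univ : Finset (Fin n))).filter (fun s => i ∈ s ∧ j ∈ s)
      = (powersetCard k (univ : Finset (Fin n))).filter
          (fun s => ({i, j} : Finset (Fin n)) ⊆ s) := by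
    apply Finset.filter_congr
    intro s _
    simp [Finset.insert_subset_iff]
  have hcard2 : ({i, j} : Finset (Fin n)).card = 2 := by
    rw [Finset.card_insert_of_notMem (by simpa using hij.symm), Finset.card_singleton]
  by_cases h2k : 2 ≤ k
  · rw [heq, count_subsets _ (by rw [hcard2]; exact h2k), if_pos h2k, hcard2,
      Fintype.card_fin]
  · have hemp : (powersetCard k (univ : Finset (Fin n))).filter
        (fun s => ({i, j} : Finset (Fin n)) ⊆ s) = ∅ := by
      refine Finset.filter_eq_empty_iff.2 fun s hs hsub => ?_
      rw [Finset.mem_powersetCard] at hs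
      exact h2k (hcard2 ▸ hs.2 ▸ Finset.card_le_card hsub)
    rw [if_neg h2k, heq, hemp]
    simp

lemma trace_eq_sum_eigen {m : Type*} [Fintype m] [DecidableEq m] {A : Matrix m m ℂ}
    (hA : A.IsHermitian) : A.trace = ∑ i, ((hA.eigenvalues i : ℝ) : ℂ) := by
  conv_lhs => rw [hA.spectral_theorem, Unitary.conjStarAlgAut_apply]
  rw [Matrix.trace_mul_comm, ← Matrix.mul_assoc,
    (Matrix.mem_unitaryGroup_iff').mp hA.eigenvectorUnitary.2, Matrix.one_mul,
    Matrix.trace_diagonal]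
  rfl

lemma trace_sq_eq {m : Type*} [Fintype m] [DecidableEq m] {A : Matrix m m ℂ}
    (hA : A.IsHermitian) : (Aᴴ * A).trace = ∑ i, (((hA.eigenvalues i : ℝ) : ℂ))^2 := by
  rw [show Aᴴ = A from hA]
  have h1 : star (hA.eigenvectorUnitary : Matrix m m ℂ) * (hA.eigenvectorUnitary : Matrix m m ℂ)
      = 1 := (Matrix.mem_unitaryGroup_iff').mp hA.eigenvectorUnitary.2
  conv_lhs => rw [hA.spectral_theorem, Unitary.conjStarAlgAut_apply]
  simp only [Matrix.mul_assoc]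
  rw [← Matrix.mul_assoc (star (hA.eigenvectorUnitary : Matrix m m ℂ)), h1, Matrix.one_mul]
  rw [Matrix.trace_mul_comm]
  simp only [Matrix.mul_assoc]
  rw [h1, Matrix.mul_one, Matrix.diagonal_mul_diagonal, Matrix.trace_diagonal]
  refine Finset.sum_congr rfl fun i _ => ?_
  simp [pow_two]

lemma smul_one_eq_diag {m : Type*} [Fintype m] [DecidableEq m] (c : ℂ) :
    c • (1 : Matrix m m ℂ) = Matrix.diagonal (fun _ => c) := by
  ext i j
  by_cases h : i = j <;> simp [Matrix.one_apply, Matrix.diagonal, h]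

lemma eig_le_of_opNorm_le {m : Type*} [Fintype m] [DecidableEq m] [Nonempty m]
    {A : Matrix m m ℂ} (hA : A.PosSemidef) {c : ℝ} (hc : 0 ≤ c)
    (h : opNorm A ≤ c) (i : m) : hA.1.eigenvalues i ≤ c := by
  set B := Aᴴ * A with hBdef
  have hB : B.IsHermitian := Matrix.isHermitian_conjTranspose_mul_self A
  have hBpsd : B.PosSemidef := Matrix.posSemidef_conjTranspose_mul_self A
  have hBeig : ∀ j, hB.eigenvalues j ≤ c ^ 2 := by
    intro j
    have h1 : Real.sqrt (hB.eigenvalues j) ≤ c := by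
      refine le_trans ?_ h
      exact le_ciSup (f := fun j : m =>
        Real.sqrt ((Matrix.isHermitian_conjTranspose_mul_self A).eigenvalues j))
        (Set.Finite.bddAbove (Set.finite_range _)) j
    have h2 : 0 ≤ hB.eigenvalues j := hBpsd.eigenvalues_nonneg j
    calc hB.eigenvalues j = Real.sqrt (hB.eigenvalues j) ^ 2 := (Real.sq_sqrt h2).symm
    _ ≤ c ^ 2 := by nlinarith [Real.sqrt_nonneg (hB.eigenvalues j)]
  have hC : ((c : ℂ) ^ 2 • 1 - B).PosSemidef := by
    set V := (hB.eigenvectorUnitary : Matrix m m ℂ) with hV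
    have hVV : V * star V = 1 := (Matrix.mem_unitaryGroup_iff).mp hB.eigenvectorUnitary.2
    have h1 : (c:ℂ)^2 • (1 : Matrix m m ℂ) = V * ((c:ℂ)^2 • 1) * star V := by
      rw [Matrix.mul_smul, Matrix.smul_mul, Matrix.mul_one, hVV]
    have h2 : Matrix.diagonal (fun j => ((c ^ 2 - hB.eigenvalues j : ℝ) : ℂ))
        = (c:ℂ)^2 • (1 : Matrix m m ℂ) - Matrix.diagonal (RCLike.ofReal ∘ hB.eigenvalues) := by
      rw [smul_one_eq_diag, Matrix.diagonal_sub]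
      funext j
      simp
    have key : (c:ℂ)^2 • (1 : Matrix m m ℂ) - B
        = V * Matrix.diagonal (fun j => ((c ^ 2 - hB.eigenvalues j : ℝ) : ℂ)) * star V := by
      rw [h2, Matrix.mul_sub, Matrix.sub_mul, ← h1]; congr 1; exact hB.spectral_theorem
    rw [key, show (star V : Matrix m m ℂ) = Vᴴ from rfl]
    exact Matrix.PosSemidef.mul_mul_conjTranspose_same
      (Matrix.posSemidef_diagonal_iff.mpr fun j => by
        rw [Complex.zero_le_real]; linarith [hBeig j]) V
  set v := ⇑(hA.1.eigenvectorBasis i) with hv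
  set μ := hA.1.eigenvalues i with hμ
  have hAv : A *ᵥ v = μ • v := hA.1.mulVec_eigenvectorBasis i
  have hBv : B *ᵥ v = (μ ^ 2 : ℝ) • v := by
    rw [hBdef, hA.1.eq, ← Matrix.mulVec_mulVec, hAv, Matrix.mulVec_smul, hAv, smul_smul]
    rw [pow_two]
  have hform := hC.dotProduct_mulVec_nonneg v
  rw [Matrix.sub_mulVec, Matrix.smul_mulVec, Matrix.one_mulVec, hBv] at hform
  have hT : star v ⬝ᵥ v = ((∑ t, Complex.normSq (v t) : ℝ) : ℂ) := by
    rw [dotProduct, Complex.ofReal_sum]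
    refine Finset.sum_congr rfl fun t _ => ?_
    rw [Pi.star_apply, Complex.normSq_eq_conj_mul_self]
    rfl
  have hTpos : 0 < ∑ t, Complex.normSq (v t) := by
    have hvne : v ≠ 0 := by
      have := hA.1.eigenvectorBasis.orthonormal.ne_zero i
      intro hcon
      apply this
      ext t
      exact congrFun hcon t
    obtain ⟨t0, ht0⟩ := Function.ne_iff.mp hvne
    refine Finset.sum_pos' (fun t _ => Complex.normSq_nonneg _) ⟨t0, Finset.mem_univ _, ?_⟩
    simpa [Complex.normSq_pos] using ht0
  have hform2 : (0:ℝ) ≤ (c ^ 2 - μ ^ 2) * ∑ t, Complex.normSq (v t) := by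
    rw [← Complex.zero_le_real]
    convert hform using 1
    rw [dotProduct_sub, dotProduct_smul, dotProduct_smul, hT,
      smul_eq_mul, Complex.real_smul]
    push_cast
    ring
  have hμ2 : μ ^ 2 ≤ c ^ 2 := by nlinarith [hTpos, hform2]
  nlinarith [hA.eigenvalues_nonneg i, hc, hμ2]

lemma subset_bound {n k : ℕ} (hk : 1 ≤ k) {P : Matrix (Fin n) (Fin n) ℂ}
    (hP : P.PosSemidef) (s : Finset (Fin n)) (hs : s.card = k)
    (hop : opNorm (principalSub P s) ≤ 1/2) :
    ∑ i ∈ s, ∑ j ∈ s, Complex.normSq (P i j) ≤ (1/2) * ∑ i ∈ s, (P i i).re := by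
  classical
  set A := principalSub P s with hA
  have hApsd : A.PosSemidef := hP.submatrix _
  have hne : Nonempty {i // i ∈ s} := by
    obtain ⟨x, hx⟩ := Finset.card_pos.mp (by omega : 0 < s.card)
    exact ⟨⟨x, hx⟩⟩
  have hμ : ∀ p, hApsd.1.eigenvalues p ≤ 1/2 :=
    eig_le_of_opNorm_le hApsd (by norm_num) hop
  have hμ0 : ∀ p, 0 ≤ hApsd.1.eigenvalues p := hApsd.eigenvalues_nonneg
  have h2 : ∑ i ∈ s, (P i i).re = ∑ p, hApsd.1.eigenvalues p := by
    have htr : ∑ i ∈ s, P i i = ∑ p, ((hApsd.1.eigenvalues p : ℝ) : ℂ) := by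
      rw [← trace_eq_sum_eigen hApsd.1, Matrix.trace,
        ← Finset.sum_coe_sort s (fun i => P i i)]
      rfl
    have := congrArg Complex.re htr
    simpa [Complex.re_sum] using this
  have h1C : ∑ q, ∑ p, (Complex.normSq (A p q) : ℂ)
      = ∑ p, (((hApsd.1.eigenvalues p : ℝ) : ℂ))^2 := by
    rw [← trace_sq_eq hApsd.1, Matrix.trace]
    refine Finset.sum_congr rfl fun q _ => ?_
    rw [Matrix.diag, Matrix.mul_apply]
    refine Finset.sum_congr rfl fun p _ => ?_
    rw [Matrix.conjTranspose_apply, Complex.normSq_eq_conj_mul_self]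
    rfl
  have h1 : ∑ i ∈ s, ∑ j ∈ s, Complex.normSq (P i j)
      = ∑ p, (hApsd.1.eigenvalues p)^2 := by
    have hre : ∑ q, ∑ p, Complex.normSq (A p q) = ∑ p, (hApsd.1.eigenvalues p)^2 := by
      exact_mod_cast h1C
    rw [← hre, Finset.sum_comm]
    rw [← Finset.sum_coe_sort s (fun j => ∑ i ∈ s, Complex.normSq (P i j))]
    refine Finset.sum_congr rfl fun q _ => ?_
    rw [← Finset.sum_coe_sort s (fun i => Complex.normSq (P i (q : Fin n)))]
    rfl
  rw [h1, h2, Finset.mul_sum]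
  exact Finset.sum_le_sum fun p _ => by nlinarith [hμ p, hμ0 p]

theorem stmt_19 {n k : ℕ} (ρ : Matrix (Fin n) (Fin n) ℂ)
    (hρ : ρ.PosSemidef) (hρtr : ρ.trace = 1) (hk : 1 ≤ k) (hkn : k < n)
    (hnorm : ∀ s : Finset (Fin n), s.card = k →
      opNorm (principalSub (rangeProj hρ.1) s) ≤ 1 / 2) :
    (ρ.rank : ℝ) ≤ (n : ℝ) * ((n : ℝ) + 1 - 2 * (k : ℝ)) / (2 * ((n : ℝ) - (k : ℝ))) := by
  classical
  set P := rangeProj hρ.1 with hPdef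
  set U := (hρ.1.eigenvectorUnitary : Matrix (Fin n) (Fin n) ℂ) with hUdef
  set χ : Fin n → ℂ := fun i => if hρ.1.eigenvalues i ≠ 0 then (1:ℂ) else 0 with hχ
  have hPeq : P = U * Matrix.diagonal χ * star U := rfl
  have hUU : star U * U = 1 := (Matrix.mem_unitaryGroup_iff').mp hρ.1.eigenvectorUnitary.2
  have hPpsd : P.PosSemidef := by
    rw [hPeq, show (star U : Matrix (Fin n) (Fin n) ℂ) = Uᴴ from rfl]
    refine Matrix.PosSemidef.mul_mul_conjTranspose_same
      (Matrix.posSemidef_diagonal_iff.mpr fun i => ?_) U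
    show (0:ℂ) ≤ if hρ.1.eigenvalues i ≠ 0 then 1 else 0
    split
    · exact zero_le_one
    · exact le_refl 0
  have hPH : Pᴴ = P := hPpsd.1
  have hPmul : P * P = P := by
    rw [hPeq]
    simp only [Matrix.mul_assoc]
    rw [← Matrix.mul_assoc (star U) U, hUU, Matrix.one_mul,
      ← Matrix.mul_assoc (Matrix.diagonal χ) (Matrix.diagonal χ),
      Matrix.diagonal_mul_diagonal,
      show (fun i => χ i * χ i) = χ by
        funext i
        rcases eq_or_ne (hρ.1.eigenvalues i) 0 with hcase | hcase <;> simp [hχ, hcase]]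
  -- trace of P equals the rank of ρ
  have hPtr : P.trace = (ρ.rank : ℂ) := by
    rw [hPeq, Matrix.trace_mul_comm, ← Matrix.mul_assoc, hUU, Matrix.one_mul,
      Matrix.trace_diagonal, hρ.1.rank_eq_card_non_zero_eigs]
    rw [Fintype.card_subtype]
    rw [show (∑ i, χ i) = ∑ i, if hρ.1.eigenvalues i ≠ 0 then (1:ℂ) else 0 from rfl,
      Finset.sum_boole]
  set r : ℝ := (ρ.rank : ℝ) with hrdef
  set d : Fin n → ℝ := fun i => (P i i).re with hd
  have hdsum : ∑ i, d i = r := by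
    have h1 : P.trace = ∑ i, P i i := rfl
    have := congrArg Complex.re (h1.symm.trans hPtr)
    simpa [Complex.re_sum, hd] using this
  have hdj : ∀ i, ∑ j, Complex.normSq (P i j) = d i := by
    intro i
    have h := congrFun (congrFun hPmul i) i
    rw [Matrix.mul_apply] at h
    have h2 : ∑ j, (Complex.normSq (P i j) : ℂ) = P i i := by
      rw [← h]
      refine Finset.sum_congr rfl fun j _ => ?_
      have hji : P j i = (starRingEnd ℂ) (P i j) := by
        have := congrFun (congrFun hPH i) j
        rw [Matrix.conjTranspose_apply] at this
        rw [← this, RCLike.star_def, Complex.conj_conj]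
      rw [hji, Complex.mul_conj]
    have := congrArg Complex.re h2
    simpa [Complex.re_sum, hd] using this
  have hdiagreal : ∀ i, P i i = ((d i : ℝ) : ℂ) := by
    intro i
    have := congrFun (congrFun hPH i) i
    rw [Matrix.conjTranspose_apply] at this
    have him : (P i i).im = 0 := by
      have h2 := congrArg Complex.im this
      simp at h2
      linarith
    refine Complex.ext rfl ?_
    simp [him, hd]
  set F : Fin n → Fin n → ℝ := fun i j => Complex.normSq (P i j) with hF
  have hFii : ∀ i, F i i = d i ^ 2 := by
    intro i
    show Complex.normSq (P i i) = d i ^ 2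
    rw [hdiagreal i, Complex.normSq_ofReal, pow_two]
  set S := powersetCard k (univ : Finset (Fin n)) with hS
  set C1 : ℝ := ((n-1).choose (k-1) : ℝ) with hC1
  set c2 : ℝ := (if 2 ≤ k then ((n-2).choose (k-2) : ℝ) else 0) with hc2
  set D : ℝ := ∑ i, d i ^ 2 with hD
  have hbound : ∀ s ∈ S, ∑ i ∈ s, ∑ j ∈ s, F i j ≤ 1/2 * ∑ i ∈ s, d i := by
    intro s hs
    have hcard : s.card = k := (Finset.mem_powersetCard.mp hs).2
    exact subset_bound hk hPpsd s hcard (hnorm s hcard)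
  have hsummed : ∑ s ∈ S, (∑ i ∈ s, ∑ j ∈ s, F i j) ≤ ∑ s ∈ S, (1/2 * ∑ i ∈ s, d i) :=
    Finset.sum_le_sum hbound
  have hLHS : ∑ s ∈ S, (∑ i ∈ s, ∑ j ∈ s, F i j) = C1 * D + c2 * (r - D) := by
    have hsplit : ∀ s ∈ S, (∑ i ∈ s, ∑ j ∈ s, F i j)
        = (∑ i ∈ s, F i i) + ∑ i ∈ s, ∑ j ∈ s.erase i, F i j := by
      intro s _
      rw [← Finset.sum_add_distrib]
      refine Finset.sum_congr rfl fun i hi => ?_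
      exact (Finset.add_sum_erase s (fun j => F i j) hi).symm
    rw [Finset.sum_congr rfl hsplit, Finset.sum_add_distrib]
    rw [hS, sum_subsets_singleton hk (fun i => F i i), sum_subsets_pair (k := k) F]
    congr 1
    · rw [hD, hC1]
      congr 1
      exact Finset.sum_congr rfl fun i _ => hFii i
    · rw [hc2]
      congr 1
      have hthis : ∀ i : Fin n, ∑ j ∈ Finset.univ.erase i, F i j = d i - d i ^ 2 := by
        intro i
        have h3 : F i i + ∑ x ∈ Finset.univ.erase i, F i x = ∑ x, F i x :=
          Finset.add_sum_erase Finset.univ (fun j => F i j) (Finset.mem_univ i)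
        rw [hFii i] at h3
        rw [show (∑ j, F i j) = d i from hdj i] at h3
        linarith
      rw [Finset.sum_congr rfl (fun i _ => hthis i), Finset.sum_sub_distrib, hdsum, hD]
  have hRHS : ∑ s ∈ S, (1/2 * ∑ i ∈ s, d i) = 1/2 * (C1 * r) := by
    rw [← Finset.mul_sum, hS, sum_subsets_singleton hk d, hdsum, hC1]
  rw [hLHS, hRHS] at hsummed
  have hid : c2 * ((n:ℝ) - 1) = C1 * ((k:ℝ) - 1) := by
    by_cases h2k : 2 ≤ k
    · have hnat : (n-1) * ((n-2).choose (k-2)) = ((n-1).choose (k-1)) * (k-1) := by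
        have h4 := Nat.add_one_mul_choose_eq (n-2) (k-2)
        have e1 : n-2+1 = n-1 := by omega
        have e2 : k-2+1 = k-1 := by omega
        rw [e1, e2] at h4
        exact h4
      have en : ((n-1:ℕ):ℝ) = (n:ℝ) - 1 := by
        rw [Nat.cast_sub (by omega)]; norm_num
      have ek : ((k-1:ℕ):ℝ) = (k:ℝ) - 1 := by
        rw [Nat.cast_sub (by omega)]; norm_num
      rw [hc2, if_pos h2k, hC1, ← en, ← ek]
      exact_mod_cast by rw [mul_comm]; exact hnat
    · have hk1 : k = 1 := by omega
      subst hk1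
      rw [hc2, if_neg h2k]
      norm_num
  have hC1pos : 0 < C1 := by
    rw [hC1]
    exact_mod_cast Nat.choose_pos (by omega : k-1 ≤ n-1)
  have hn1 : (0:ℝ) < (n:ℝ) - 1 := by
    have h5 : (2:ℝ) ≤ (n:ℝ) := by exact_mod_cast (by omega : 2 ≤ n)
    linarith
  have hmul := mul_le_mul_of_nonneg_left hsummed (le_of_lt hn1)
  have step1 : ((n:ℝ)-1)*D + ((k:ℝ)-1)*(r-D) ≤ ((n:ℝ)-1)*r/2 := by
    have heq : ((n:ℝ)-1)*(C1*D + c2*(r-D)) = C1*(((n:ℝ)-1)*D + ((k:ℝ)-1)*(r-D)) := by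
      linear_combination (r - D) * hid
    have heq2 : ((n:ℝ)-1)*(1/2*(C1*r)) = C1*(((n:ℝ)-1)*r/2) := by ring
    rw [heq, heq2] at hmul
    exact le_of_mul_le_mul_left hmul hC1pos
  have hcheb : r^2 ≤ (n:ℝ) * D := by
    have h6 := sq_sum_le_card_mul_sum_sq (s := (Finset.univ : Finset (Fin n))) (f := d)
    rw [hdsum] at h6
    simpa [hD] using h6
  have hr1 : (1:ℝ) ≤ r := by
    have hex : ∃ i, hρ.1.eigenvalues i ≠ 0 := by
      by_contra hno
      push_neg at hno
      have h0 : ρ.trace = 0 := by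
        rw [trace_eq_sum_eigen hρ.1]
        simp [hno]
      rw [hρtr] at h0
      exact one_ne_zero h0
    have h7 : 0 < ρ.rank := by
      rw [hρ.1.rank_eq_card_non_zero_eigs]
      obtain ⟨i, hi⟩ := hex
      exact Fintype.card_pos_iff.mpr ⟨⟨i, hi⟩⟩
    rw [hrdef]
    exact_mod_cast h7
  have hknR : (k:ℝ) < (n:ℝ) := by exact_mod_cast hkn
  rw [le_div_iff₀ (by linarith : (0:ℝ) < 2*((n:ℝ)-(k:ℝ)))]
  have m1 : ((n:ℝ)-k) * r^2 ≤ ((n:ℝ)-k) * ((n:ℝ)*D) :=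
    mul_le_mul_of_nonneg_left hcheb (by linarith)
  have m2 : (n:ℝ) * (((n:ℝ)-1)*D + ((k:ℝ)-1)*(r-D)) ≤ (n:ℝ)*(((n:ℝ)-1)*r/2) :=
    mul_le_mul_of_nonneg_left step1 (by positivity)
  have key : ((n:ℝ)-(k:ℝ)) * r^2 ≤ (n:ℝ)*((n:ℝ)+1-2*(k:ℝ))*r/2 := by nlinarith [m1, m2]
  have key2 : (r * (2*((n:ℝ)-(k:ℝ)))) * r ≤ ((n:ℝ)*((n:ℝ)+1-2*(k:ℝ))) * r := by nlinarith [key]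
  exact le_of_mul_le_mul_right key2 (by linarith : (0:ℝ) < r)
end
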